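/- arXiv:0909.5324 — 2 statements merged into one kernel-verified Lean document; each statement's English description precedes it below -/
import Mathlib

section
/- Let n ≥ 2. The map s ↦ (γ_1(s), …, γ_{n-1}(s)) is a bijection from the set of dominant elements of S̃_n onto ℕ^{n-1}. Moreover, a dominant element s of S̃_n satisfies s(i) + n > s(i+1) for all 1 ≤ i ≤ n-1 (i.e., s lies in the unit hypercube) if and only if γ_i(s) ≤ i-1 for all 1 ≤ i ≤ n-1. -/
open scoped Classical

lemma ncard_inter_Ioo (R : Set ℤ) (x b : ℤ) :
    (R ∩ Set.Ioo x b).ncard = ((Finset.Ioo x b).filter (fun t => t ∈ R)).card := by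
  rw [← Set.ncard_coe_finset]
  congr 1
  ext t
  simp [and_comm]

lemma mem_period (n : ℕ) (R : Set ℤ) (hper : ∀ t : ℤ, t ∈ R ↔ t + n ∈ R) :
    ∀ (t : ℤ) (m : ℤ), t + n * m ∈ R ↔ t ∈ R := by
  intro t m
  induction m using Int.induction_on with
  | zero => simp
  | succ k ih => rw [show t + n*(k+1) = (t + n*k) + n by ring, ← hper]; exact ih
  | pred k ih =>
    rw [hper (t + n*(-k-1)), show t + n*(-k-1) + n = t + n*(-k) by ring]; exact ih

lemma exists_greatest_below (n : ℕ) (hn : 0 < n) (R : Set ℤ)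
    (hper : ∀ t : ℤ, t ∈ R ↔ t + n ∈ R) (hne : R.Nonempty) (y : ℤ) :
    ∃ x, x ∈ R ∧ x < y ∧ ∀ t ∈ R, t < y → t ≤ x := by
  obtain ⟨r, hr⟩ := hne
  have hwin : ∃ z, z ∈ (Finset.Ico (y - n) y).filter (fun t => t ∈ R) := by
    refine ⟨r + n * ((y - 1 - r) / n), ?_⟩
    have h0 : (0:ℤ) < n := by exact_mod_cast hn
    have h1 : (n:ℤ) * ((y - 1 - r) / n) + (y - 1 - r) % n = y - 1 - r := Int.mul_ediv_add_emod _ _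
    have h2 : 0 ≤ (y - 1 - r) % n := Int.emod_nonneg _ (by positivity)
    have h3 : (y - 1 - r) % n < n := Int.emod_lt_of_pos _ h0
    simp only [Finset.mem_filter, Finset.mem_Ico]
    refine ⟨⟨by omega, by omega⟩, (mem_period n R hper r _).2 hr⟩
  obtain ⟨z, hz⟩ := hwin
  have hfne : ((Finset.Ico (y - n) y).filter (fun t => t ∈ R)).Nonempty := ⟨z, hz⟩
  set x := ((Finset.Ico (y - n) y).filter (fun t => t ∈ R)).max' hfne with hx
  have hxmem := Finset.mem_filter.1 (((Finset.Ico (y - n) y).filter (fun t => t ∈ R)).max'_mem hfne)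
  refine ⟨x, hxmem.2, (Finset.mem_Ico.1 hxmem.1).2, ?_⟩
  intro t ht hty
  by_cases hcase : y - n ≤ t
  · exact Finset.le_max' _ t (Finset.mem_filter.2 ⟨Finset.mem_Ico.2 ⟨hcase, hty⟩, ht⟩)
  · have := (Finset.mem_Ico.1 hxmem.1).1
    omega

lemma count_strict_anti (R : Set ℤ) (x x' b : ℤ) (hx' : x' ∈ R) (h1 : x < x') (h2 : x' < b) :
    (R ∩ Set.Ioo x' b).ncard < (R ∩ Set.Ioo x b).ncard := by
  rw [ncard_inter_Ioo, ncard_inter_Ioo]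
  apply Finset.card_lt_card
  rw [Finset.ssubset_iff_of_subset]
  · refine ⟨x', ?_, ?_⟩
    · simp only [Finset.mem_filter, Finset.mem_Ioo]; exact ⟨⟨h1, h2⟩, hx'⟩
    · simp
  · intro t ht
    simp only [Finset.mem_filter, Finset.mem_Ioo] at *
    exact ⟨⟨by omega, ht.1.2⟩, ht.2⟩

lemma key_existsUnique (n : ℕ) (hn : 0 < n) (R : Set ℤ)
    (hper : ∀ t : ℤ, t ∈ R ↔ t + n ∈ R) (hne : R.Nonempty) (b : ℤ) (c : ℕ) :
    ∃! x : ℤ, x ∈ R ∧ x < b ∧ (R ∩ Set.Ioo x b).ncard = c := by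
  have huniq : ∀ (d : ℕ) (x y : ℤ), (x ∈ R ∧ x < b ∧ (R ∩ Set.Ioo x b).ncard = d) →
      (y ∈ R ∧ y < b ∧ (R ∩ Set.Ioo y b).ncard = d) → x = y := by
    intro d x y hx hy
    rcases lt_trichotomy x y with h | h | h
    · exfalso
      have := count_strict_anti R x y b hy.1 h hy.2.1
      omega
    · exact h
    · exfalso
      have := count_strict_anti R y x b hx.1 h hx.2.1
      omega
  induction c with
  | zero =>
    obtain ⟨x, hxR, hxb, hgr⟩ := exists_greatest_below n hn R hper hne b
    have hc : (R ∩ Set.Ioo x b).ncard = 0 := by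
      rw [Set.ncard_eq_zero (Set.Finite.inter_of_right (Set.finite_Ioo x b) R)]
      ext t
      simp only [Set.mem_inter_iff, Set.mem_Ioo, Set.mem_empty_iff_false, iff_false]
      rintro ⟨htR, ht1, ht2⟩
      have := hgr t htR ht2
      omega
    exact ⟨x, ⟨hxR, hxb, hc⟩, fun y hy => huniq 0 y x hy ⟨hxR, hxb, hc⟩⟩
  | succ c ih =>
    obtain ⟨x, ⟨hxR, hxb, hxc⟩, -⟩ := ih
    obtain ⟨x', hx'R, hx'x, hgr⟩ := exists_greatest_below n hn R hper hne x
    have hkey : R ∩ Set.Ioo x' b = insert x (R ∩ Set.Ioo x b) := by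
      ext t
      simp only [Set.mem_inter_iff, Set.mem_Ioo, Set.mem_insert_iff]
      constructor
      · rintro ⟨htR, h1, h2⟩
        rcases lt_trichotomy t x with h | h | h
        · exact absurd (hgr t htR h) (by omega)
        · exact Or.inl h
        · exact Or.inr ⟨htR, h, h2⟩
      · rintro (rfl | ⟨htR, h1, h2⟩)
        · exact ⟨hxR, hx'x, hxb⟩
        · exact ⟨htR, by omega, h2⟩
    have hcount : (R ∩ Set.Ioo x' b).ncard = c + 1 := by
      rw [hkey, Set.ncard_insert_of_notMem (by simp)
        (Set.Finite.inter_of_right (Set.finite_Ioo x b) R), hxc]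
    exact ⟨x', ⟨hx'R, by omega, hcount⟩, fun y hy => huniq (c+1) y x' hy ⟨hx'R, by omega, hcount⟩⟩

noncomputable def pickX (R : Set ℤ) (b : ℤ) (c : ℕ) : ℤ :=
  if h : ∃ x : ℤ, x ∈ R ∧ x < b ∧ (R ∩ Set.Ioo x b).ncard = c then h.choose else 0

lemma pickX_spec (n : ℕ) (hn : 0 < n) (R : Set ℤ)
    (hper : ∀ t : ℤ, t ∈ R ↔ t + n ∈ R) (hne : R.Nonempty) (b : ℤ) (c : ℕ) :
    pickX R b c ∈ R ∧ pickX R b c < b ∧ (R ∩ Set.Ioo (pickX R b c) b).ncard = c := by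
  have h := key_existsUnique n hn R hper hne b c
  rw [pickX, dif_pos h.exists]
  exact h.exists.choose_spec



/-- `s` is an element of the affine symmetric group `S̃_n`: a bijection of `ℤ` commuting
with translation by `n` and with normalized sum over a fundamental window. -/
def IsAffPerm (n : ℕ) (s : ℤ → ℤ) : Prop :=
  Function.Bijective s ∧ (∀ i : ℤ, s (i + n) = s i + n) ∧
    ∑ i ∈ Finset.Icc (1 : ℤ) (n : ℤ), s i = ∑ i ∈ Finset.Icc (1 : ℤ) (n : ℤ), i

/-- `s` is dominant: `s(1) < s(2) < ⋯ < s(n)`. -/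
def IsDominant (n : ℕ) (s : ℤ → ℤ) : Prop :=
  ∀ i : ℤ, 1 ≤ i → i < (n : ℤ) → s i < s (i + 1)

/-- The inversion number of `s` (equal to the Coxeter length). -/
noncomputable def invNum (n : ℕ) (s : ℤ → ℤ) : ℕ :=
  Set.ncard {p : ℤ × ℤ | 1 ≤ p.1 ∧ p.1 ≤ (n : ℤ) ∧ p.1 < p.2 ∧ s p.2 < s p.1}

/-- `γ_i(s)` : the number of integers `t` with `s(i) < t < s(i+1)` such that
`t ≢ s(k) (mod n)` for all `i+1 ≤ k ≤ n`. -/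
noncomputable def gam (n : ℕ) (s : ℤ → ℤ) (i : ℤ) : ℕ :=
  Set.ncard {t : ℤ | s i < t ∧ t < s (i + 1) ∧
    ∀ k : ℤ, i + 1 ≤ k → k ≤ (n : ℤ) → ¬ t ≡ s k [ZMOD (n : ℤ)]}

/-- The set of integers avoiding the residue classes of `s k`, `i+1 ≤ k ≤ n`. -/
def Rset (n : ℕ) (s : ℤ → ℤ) (i : ℤ) : Set ℤ :=
  {t : ℤ | ∀ k : ℤ, i + 1 ≤ k → k ≤ (n : ℤ) → ¬ t ≡ s k [ZMOD (n : ℤ)]}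

lemma gam_eq (n : ℕ) (s : ℤ → ℤ) (i : ℤ) :
    gam n s i = (Rset n s i ∩ Set.Ioo (s i) (s (i + 1))).ncard := by
  unfold gam Rset
  congr 1
  ext t
  simp only [Set.mem_setOf_eq, Set.mem_inter_iff, Set.mem_Ioo]
  tauto

lemma emod_add_n (n : ℕ) (t : ℤ) : (t + n) % n = t % n := by
  conv_lhs => rw [show t + (n:ℤ) = t + n * 1 by ring]
  exact Int.add_mul_emod_self_left ..

lemma modeq_add_n (n : ℕ) (t u : ℤ) : (t + n ≡ u [ZMOD (n:ℤ)]) ↔ (t ≡ u [ZMOD (n:ℤ)]) := by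
  unfold Int.ModEq
  rw [emod_add_n]

lemma Rset_periodic (n : ℕ) (s : ℤ → ℤ) (i : ℤ) :
    ∀ t : ℤ, t ∈ Rset n s i ↔ t + n ∈ Rset n s i := by
  intro t
  unfold Rset
  simp only [Set.mem_setOf_eq]
  constructor
  · intro h k h1 h2
    rw [modeq_add_n]
    exact h k h1 h2
  · intro h k h1 h2
    have := h k h1 h2
    rw [modeq_add_n] at this
    exact this

lemma image_range_int (a : ℤ) (m : ℕ) :
    (Finset.range m).image (fun k : ℕ => a + (k:ℤ)) = Finset.Ico a (a + m) := by
  ext x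
  simp only [Finset.mem_image, Finset.mem_range, Finset.mem_Ico]
  constructor
  · rintro ⟨k, hk, rfl⟩
    omega
  · intro h
    exact ⟨(x - a).toNat, by omega, by omega⟩

lemma sum_int_Ico {M : Type*} [AddCommMonoid M] (a : ℤ) (m : ℕ) (f : ℤ → M) :
    ∑ i ∈ Finset.Ico a (a + m), f i = ∑ k ∈ Finset.range m, f (a + k) := by
  rw [← image_range_int, Finset.sum_image]
  intro x _ y _ h
  have h' : a + (x:ℤ) = a + (y:ℤ) := h
  omega

lemma sum_window {M : Type*} [AddCommMonoid M] (m : ℕ) (f : ℤ → M) :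
    ∑ i ∈ Finset.Icc (1:ℤ) (m:ℤ), f i = ∑ k ∈ Finset.range m, f (1 + k) := by
  rw [show Finset.Icc (1:ℤ) (m:ℤ) = Finset.Ico (1:ℤ) (1 + m) by ext x; simp; omega]
  exact sum_int_Ico 1 m f

lemma gauss_int (m : ℕ) : 2 * (∑ k ∈ Finset.range m, (k:ℤ)) = m * (m - 1) := by
  induction m with
  | zero => simp
  | succ p ih =>
    rw [Finset.sum_range_succ, show 2 * ((∑ k ∈ Finset.range p, (k:ℤ)) + p)
      = 2 * (∑ k ∈ Finset.range p, (k:ℤ)) + 2 * p by ring, ih]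
    push_cast
    ring

lemma window_mono (n : ℕ) (s : ℤ → ℤ)
    (hmono : ∀ i : ℤ, 1 ≤ i → i < (n:ℤ) → s i < s (i+1)) :
    ∀ j k : ℤ, 1 ≤ j → j ≤ k → k ≤ (n:ℤ) → s j ≤ s k := by
  intro j k hj hjk hk
  obtain ⟨m, rfl⟩ : ∃ m : ℕ, k = j + m := ⟨(k - j).toNat, by omega⟩
  clear hjk
  induction m with
  | zero => simp
  | succ p ih =>
    have hk' : j + (p:ℤ) ≤ (n:ℤ) := by push_cast at hk; omega
    have h3 := ih (by omega)
    have h2 := hmono (j + p) (by omega) (by push_cast at hk; omega)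
    have : j + ((p:ℕ)+1:ℕ) = (j + (p:ℤ)) + 1 := by push_cast; ring
    rw [this]
    omega

lemma window_complete (n : ℕ) (hn : 0 < n) (s : ℤ → ℤ)
    (hdist : ∀ j k : ℤ, 1 ≤ j → j ≤ (n:ℤ) → 1 ≤ k → k ≤ (n:ℤ) →
      s j ≡ s k [ZMOD (n:ℤ)] → j = k) :
    ∀ t : ℤ, ∃ k : ℤ, 1 ≤ k ∧ k ≤ (n:ℤ) ∧ t ≡ s k [ZMOD (n:ℤ)] := by
  intro t
  have hnpos : (0:ℤ) < n := by exact_mod_cast hn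
  have hinj : ∀ x ∈ Finset.Icc (1:ℤ) (n:ℤ), ∀ y ∈ Finset.Icc (1:ℤ) (n:ℤ),
      s x % n = s y % n → x = y := by
    intro x hx y hy h
    simp only [Finset.mem_Icc] at hx hy
    exact hdist x y hx.1 hx.2 hy.1 hy.2 h
  have himg : (Finset.Icc (1:ℤ) (n:ℤ)).image (fun j => s j % n) ⊆ Finset.Ico (0:ℤ) (n:ℤ) := by
    intro x hx
    simp only [Finset.mem_image] at hx
    obtain ⟨j, _, rfl⟩ := hx
    simp only [Finset.mem_Ico]
    exact ⟨Int.emod_nonneg _ (by omega), Int.emod_lt_of_pos _ hnpos⟩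
  have hcard : (Finset.Ico (0:ℤ) (n:ℤ)).card ≤
      ((Finset.Icc (1:ℤ) (n:ℤ)).image (fun j => s j % n)).card := by
    rw [Finset.card_image_of_injOn (fun x hx y hy h => hinj x hx y hy h)]
    rw [Int.card_Icc, Int.card_Ico]
    omega
  have heq := Finset.eq_of_subset_of_card_le himg hcard
  have ht : t % n ∈ Finset.Ico (0:ℤ) (n:ℤ) := by
    simp only [Finset.mem_Ico]
    exact ⟨Int.emod_nonneg _ (by omega), Int.emod_lt_of_pos _ hnpos⟩
  rw [← heq] at ht
  simp only [Finset.mem_image, Finset.mem_Icc] at ht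
  obtain ⟨k, hk, hfk⟩ := ht
  exact ⟨k, hk.1, hk.2, hfk.symm⟩

lemma count_class (n : ℕ) (hn : 0 < n) (x y : ℤ) (hxy : x ≤ y)
    (hnd : x = y ∨ ¬ (n:ℤ) ∣ (y - x)) :
    ((({t : ℤ | t ≡ x [ZMOD (n:ℤ)]} ∩ Set.Ioo x y).ncard : ℤ)) = (y - x) / n := by
  have hnpos : (0:ℤ) < n := by exact_mod_cast hn
  rcases hnd with rfl | hnd
  · simp
  have hxy' : x < y := lt_of_le_of_ne hxy (fun h => hnd (by rw [h]; simp))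
  have hmod : (y - x) % n ≠ 0 := fun h => hnd (Int.dvd_of_emod_eq_zero h)
  have hdm : (n:ℤ) * ((y-x)/n) + (y-x) % n = y - x := Int.mul_ediv_add_emod _ _
  have hmodpos : 0 < (y-x) % n :=
    lt_of_le_of_ne (Int.emod_nonneg _ (by omega)) (Ne.symm hmod)
  have hq0 : 0 ≤ (y-x)/n := Int.ediv_nonneg (by omega) (by omega)
  have himg : {t : ℤ | t ≡ x [ZMOD (n:ℤ)]} ∩ Set.Ioo x y =
      ↑((Finset.Icc 1 ((y-x)/n)).image (fun m => x + n * m)) := by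
    ext t
    simp only [Set.mem_inter_iff, Set.mem_setOf_eq, Set.mem_Ioo, Finset.coe_image,
      Set.mem_image, Finset.mem_coe, Finset.mem_Icc]
    constructor
    · rintro ⟨h3, h1, h2⟩
      obtain ⟨m0, hm0⟩ := Int.ModEq.dvd h3
      have hmns : (n:ℤ) * (-m0) = -((n:ℤ)*m0) := by ring
      refine ⟨-m0, ⟨?_, ?_⟩, by omega⟩
      · by_contra hcon
        push_neg at hcon
        have : (n:ℤ) * (-m0) ≤ 0 := mul_nonpos_of_nonneg_of_nonpos (by omega) (by omega)
        omega
      · have hm' : -m0 = (t - x) / n := by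
          rw [show t - x = (n:ℤ)*(-m0) by omega,
            Int.mul_ediv_cancel_left _ (by omega : (n:ℤ) ≠ 0)]
        rw [hm']
        exact Int.ediv_le_ediv hnpos (by omega)
    · rintro ⟨m, ⟨hm1, hm2⟩, rfl⟩
      have hnm : (n:ℤ)*m ≤ n*((y-x)/n) := mul_le_mul_of_nonneg_left hm2 (by omega)
      have hpos : 0 < (n:ℤ)*m := mul_pos hnpos (by omega)
      exact ⟨Int.add_mul_emod_self_left .., by omega, by omega⟩
  rw [himg, Set.ncard_coe_finset, Finset.card_image_of_injOn, Int.card_Icc]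
  · simp only [add_sub_cancel_right]
    omega
  · intro a _ b _ h
    have h' : x + (n:ℤ) * a = x + (n:ℤ) * b := h
    have : (n:ℤ) * a = n * b := by omega
    exact mul_left_cancel₀ (by omega : (n:ℤ) ≠ 0) this

noncomputable def Hfun (n : ℕ) (s : ℤ → ℤ) (i : ℤ) : ℕ :=
  (Rset n s i ∩ Set.Ioo (s i) (s (n:ℤ))).ncard

noncomputable def Ffun (n : ℕ) (s : ℤ → ℤ) (j : ℤ) : ℕ :=
  ({t : ℤ | t ≡ s j [ZMOD (n:ℤ)]} ∩ Set.Ioo (s j) (s (n:ℤ))).ncard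

lemma step_eq (n : ℕ) (hn : 2 ≤ n) (s : ℤ → ℤ)
    (hmono : ∀ i : ℤ, 1 ≤ i → i < (n:ℤ) → s i < s (i+1))
    (hdist : ∀ j k : ℤ, 1 ≤ j → j ≤ (n:ℤ) → 1 ≤ k → k ≤ (n:ℤ) →
      s j ≡ s k [ZMOD (n:ℤ)] → j = k)
    (i : ℤ) (hi1 : 1 ≤ i) (hi2 : i ≤ (n:ℤ) - 1) :
    Hfun n s i + Ffun n s (i+1) = gam n s i + Hfun n s (i+1) := by
  have hii : s i < s (i+1) := hmono i hi1 (by omega)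
  have hin : s (i+1) ≤ s (n:ℤ) := window_mono n s hmono (i+1) (n:ℤ) (by omega) (by omega) le_rfl
  have hnotin : s (i+1) ∉ Rset n s i := fun h => h (i+1) le_rfl (by omega) (Int.ModEq.refl _)
  have h1 : Hfun n s i = gam n s i + (Rset n s i ∩ Set.Ioo (s (i+1)) (s (n:ℤ))).ncard := by
    have hsplit : Rset n s i ∩ Set.Ioo (s i) (s (n:ℤ)) =
        (Rset n s i ∩ Set.Ioo (s i) (s (i+1))) ∪ (Rset n s i ∩ Set.Ioo (s (i+1)) (s (n:ℤ))) := by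
      ext t
      simp only [Set.mem_inter_iff, Set.mem_Ioo, Set.mem_union]
      constructor
      · rintro ⟨hR, hl, hr⟩
        rcases lt_trichotomy t (s (i+1)) with h | h | h
        · exact Or.inl ⟨hR, hl, h⟩
        · exact absurd (h ▸ hR) hnotin
        · exact Or.inr ⟨hR, h, hr⟩
      · rintro (⟨hR, hl, hr⟩ | ⟨hR, hl, hr⟩) <;> exact ⟨hR, by omega, by omega⟩
    have hdisj : Disjoint (Rset n s i ∩ Set.Ioo (s i) (s (i+1)))
        (Rset n s i ∩ Set.Ioo (s (i+1)) (s (n:ℤ))) := by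
      rw [Set.disjoint_left]
      rintro t ⟨_, _, h2⟩ ⟨_, h3, _⟩
      omega
    rw [Hfun, hsplit, Set.ncard_union_eq hdisj
      (Set.Finite.inter_of_right (Set.finite_Ioo _ _) _)
      (Set.Finite.inter_of_right (Set.finite_Ioo _ _) _), gam_eq]
  have hRsucc : Rset n s (i+1) = Rset n s i ∪ {t : ℤ | t ≡ s (i+1) [ZMOD (n:ℤ)]} := by
    ext t
    simp only [Rset, Set.mem_setOf_eq, Set.mem_union]
    constructor
    · intro h
      by_cases hc : t ≡ s (i+1) [ZMOD (n:ℤ)]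
      · exact Or.inr hc
      · refine Or.inl (fun k hk1 hk2 => ?_)
        rcases eq_or_lt_of_le hk1 with heq | hlt
        · rw [← heq]; exact hc
        · exact h k (by omega) hk2
    · rintro (h | h) k hk1 hk2
      · exact h k (by omega) hk2
      · intro hcon
        have : s (i+1) ≡ s k [ZMOD (n:ℤ)] := (Int.ModEq.symm h).trans hcon
        have := hdist (i+1) k (by omega) (by omega) (by omega) hk2 this
        omega
  have h2 : Hfun n s (i+1) =
      (Rset n s i ∩ Set.Ioo (s (i+1)) (s (n:ℤ))).ncard + Ffun n s (i+1) := by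
    have hdisj : Disjoint (Rset n s i ∩ Set.Ioo (s (i+1)) (s (n:ℤ)))
        ({t : ℤ | t ≡ s (i+1) [ZMOD (n:ℤ)]} ∩ Set.Ioo (s (i+1)) (s (n:ℤ))) := by
      rw [Set.disjoint_left]
      rintro t ⟨hR, _⟩ ⟨hc, _⟩
      exact hR (i+1) le_rfl (by omega) hc
    rw [Hfun, hRsucc, Set.union_inter_distrib_right, Set.ncard_union_eq hdisj
      (Set.Finite.inter_of_right (Set.finite_Ioo _ _) _)
      (Set.Finite.inter_of_right (Set.finite_Ioo _ _) _)]
    rfl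
  omega

lemma sum_gam_eq_sum_F (n : ℕ) (hn : 2 ≤ n) (s : ℤ → ℤ)
    (hmono : ∀ i : ℤ, 1 ≤ i → i < (n:ℤ) → s i < s (i+1))
    (hdist : ∀ j k : ℤ, 1 ≤ j → j ≤ (n:ℤ) → 1 ≤ k → k ≤ (n:ℤ) →
      s j ≡ s k [ZMOD (n:ℤ)] → j = k) :
    ∑ i ∈ Finset.Icc (1:ℤ) ((n:ℤ)-1), gam n s i = ∑ j ∈ Finset.Icc (1:ℤ) (n:ℤ), Ffun n s j := by
  have hsum : ∑ i ∈ Finset.Icc (1:ℤ) ((n:ℤ)-1), (Hfun n s i + Ffun n s (i+1)) =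
      ∑ i ∈ Finset.Icc (1:ℤ) ((n:ℤ)-1), (gam n s i + Hfun n s (i+1)) := by
    apply Finset.sum_congr rfl
    intro i hi
    simp only [Finset.mem_Icc] at hi
    exact step_eq n hn s hmono hdist i hi.1 hi.2
  rw [Finset.sum_add_distrib, Finset.sum_add_distrib] at hsum
  have hreidx : ∀ f : ℤ → ℕ, ∑ i ∈ Finset.Icc (1:ℤ) ((n:ℤ)-1), f (i+1)
      = ∑ j ∈ Finset.Icc (2:ℤ) (n:ℤ), f j := by
    intro f
    rw [show Finset.Icc (2:ℤ) (n:ℤ) = (Finset.Icc (1:ℤ) ((n:ℤ)-1)).image (fun i => i + 1) by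
      ext x
      simp only [Finset.mem_Icc, Finset.mem_image]
      constructor
      · intro h; exact ⟨x - 1, by omega, by omega⟩
      · rintro ⟨i, hi, rfl⟩; omega]
    rw [Finset.sum_image (by intro x _ y _ h; have h' : x + 1 = y + 1 := h; omega)]
  rw [hreidx, hreidx] at hsum
  have hHn : Hfun n s (n:ℤ) = 0 := by
    rw [Hfun]
    simp
  have hH1F1 : Hfun n s 1 = Ffun n s 1 := by
    have : Rset n s 1 = {t : ℤ | t ≡ s 1 [ZMOD (n:ℤ)]} := by
      ext t
      simp only [Rset, Set.mem_setOf_eq]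
      constructor
      · intro h
        obtain ⟨k, hk1, hk2, hk3⟩ := window_complete n (by omega) s hdist t
        rcases eq_or_lt_of_le hk1 with heq | hlt
        · rw [heq]; exact hk3
        · exact absurd hk3 (h k (by omega) hk2)
      · intro h k hk1 hk2 hcon
        have : s 1 ≡ s k [ZMOD (n:ℤ)] := (Int.ModEq.symm h).trans hcon
        have := hdist 1 k (by omega) (by omega) (by omega) hk2 this
        omega
    rw [Hfun, Ffun, this]
  have hsplit1 : ∑ i ∈ Finset.Icc (1:ℤ) ((n:ℤ)-1), Hfun n s i
      = Hfun n s 1 + ∑ i ∈ Finset.Icc (2:ℤ) ((n:ℤ)-1), Hfun n s i := by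
    rw [show Finset.Icc (1:ℤ) ((n:ℤ)-1) = insert 1 (Finset.Icc (2:ℤ) ((n:ℤ)-1)) by
      ext x; simp only [Finset.mem_Icc, Finset.mem_insert]; omega]
    rw [Finset.sum_insert (by simp)]
  have hsplit2 : ∑ i ∈ Finset.Icc (2:ℤ) (n:ℤ), Hfun n s i
      = (∑ i ∈ Finset.Icc (2:ℤ) ((n:ℤ)-1), Hfun n s i) + Hfun n s (n:ℤ) := by
    rw [show Finset.Icc (2:ℤ) (n:ℤ) = insert (n:ℤ) (Finset.Icc (2:ℤ) ((n:ℤ)-1)) by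
      ext x; simp only [Finset.mem_Icc, Finset.mem_insert]; omega]
    rw [Finset.sum_insert (by simp)]
    omega
  have hsplit3 : ∑ j ∈ Finset.Icc (1:ℤ) (n:ℤ), Ffun n s j
      = Ffun n s 1 + ∑ j ∈ Finset.Icc (2:ℤ) (n:ℤ), Ffun n s j := by
    rw [show Finset.Icc (1:ℤ) (n:ℤ) = insert 1 (Finset.Icc (2:ℤ) (n:ℤ)) by
      ext x; simp only [Finset.mem_Icc, Finset.mem_insert]; omega]
    rw [Finset.sum_insert (by simp)]
  omega

lemma sum_gamma_iff (n : ℕ) (hn : 2 ≤ n) (s : ℤ → ℤ)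
    (hmono : ∀ i : ℤ, 1 ≤ i → i < (n:ℤ) → s i < s (i+1))
    (hdist : ∀ j k : ℤ, 1 ≤ j → j ≤ (n:ℤ) → 1 ≤ k → k ≤ (n:ℤ) →
      s j ≡ s k [ZMOD (n:ℤ)] → j = k) :
    ((∑ i ∈ Finset.Icc (1:ℤ) ((n:ℤ)-1), (gam n s i : ℤ)) = s (n:ℤ) - n) ↔
    (∑ i ∈ Finset.Icc (1:ℤ) (n:ℤ), s i = ∑ i ∈ Finset.Icc (1:ℤ) (n:ℤ), i) := by
  have hnpos : (0:ℤ) < n := by exact_mod_cast (by omega : 0 < n)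
  have hA : (∑ i ∈ Finset.Icc (1:ℤ) ((n:ℤ)-1), (gam n s i : ℤ))
      = ∑ j ∈ Finset.Icc (1:ℤ) (n:ℤ), (Ffun n s j : ℤ) := by
    rw [← Nat.cast_sum, ← Nat.cast_sum, sum_gam_eq_sum_F n hn s hmono hdist]
  have hB : ∀ j ∈ Finset.Icc (1:ℤ) (n:ℤ), (Ffun n s j : ℤ) = (s (n:ℤ) - s j) / n := by
    intro j hj
    simp only [Finset.mem_Icc] at hj
    rw [Ffun]
    apply count_class n (by omega) _ _ (window_mono n s hmono j (n:ℤ) hj.1 hj.2 le_rfl)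
    rcases eq_or_lt_of_le hj.2 with heq | hlt
    · left; rw [heq]
    · right
      intro hdvd
      have := hdist j (n:ℤ) hj.1 hj.2 (by omega) le_rfl (Int.modEq_iff_dvd.mpr hdvd)
      omega
  have hFD : ∑ j ∈ Finset.Icc (1:ℤ) (n:ℤ), (Ffun n s j : ℤ)
      = ∑ j ∈ Finset.Icc (1:ℤ) (n:ℤ), (s (n:ℤ) - s j) / n := Finset.sum_congr rfl hB
  have hres : ∑ j ∈ Finset.Icc (1:ℤ) (n:ℤ), (s (n:ℤ) - s j) % n
      = ∑ k ∈ Finset.range n, (k:ℤ) := by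
    have hinj : ∀ x ∈ Finset.Icc (1:ℤ) (n:ℤ), ∀ y ∈ Finset.Icc (1:ℤ) (n:ℤ),
        (s (n:ℤ) - s x) % n = (s (n:ℤ) - s y) % n → x = y := by
      intro x hx y hy h
      simp only [Finset.mem_Icc] at hx hy
      have hd : (n:ℤ) ∣ ((s (n:ℤ) - s y) - (s (n:ℤ) - s x)) := Int.ModEq.dvd h
      have hd2 : (n:ℤ) ∣ (s x - s y) := by
        have : (s (n:ℤ) - s y) - (s (n:ℤ) - s x) = s x - s y := by ring
        rwa [this] at hd
      exact hdist x y hx.1 hx.2 hy.1 hy.2 (Int.modEq_iff_dvd.mpr hd2).symm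
    have himg : (Finset.Icc (1:ℤ) (n:ℤ)).image (fun j => (s (n:ℤ) - s j) % n)
        = Finset.Ico (0:ℤ) (n:ℤ) := by
      apply Finset.eq_of_subset_of_card_le
      · intro x hx
        simp only [Finset.mem_image] at hx
        obtain ⟨j, _, rfl⟩ := hx
        simp only [Finset.mem_Ico]
        exact ⟨Int.emod_nonneg _ (by omega), Int.emod_lt_of_pos _ hnpos⟩
      · rw [Finset.card_image_of_injOn (fun x hx y hy h => hinj x hx y hy h)]
        rw [Int.card_Icc, Int.card_Ico]
        omega
    have h1 : ∑ x ∈ (Finset.Icc (1:ℤ) (n:ℤ)).image (fun j => (s (n:ℤ) - s j) % n), x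
        = ∑ j ∈ Finset.Icc (1:ℤ) (n:ℤ), (s (n:ℤ) - s j) % n := Finset.sum_image hinj
    rw [← h1, himg]
    have := sum_int_Ico (0:ℤ) n (fun x => x)
    simp only [zero_add] at this
    rw [this]
  have hsumdm : (n:ℤ) * (∑ j ∈ Finset.Icc (1:ℤ) (n:ℤ), (s (n:ℤ) - s j) / n)
      + (∑ j ∈ Finset.Icc (1:ℤ) (n:ℤ), (s (n:ℤ) - s j) % n)
      = ∑ j ∈ Finset.Icc (1:ℤ) (n:ℤ), (s (n:ℤ) - s j) := by
    rw [Finset.mul_sum, ← Finset.sum_add_distrib]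
    exact Finset.sum_congr rfl (fun j _ => Int.mul_ediv_add_emod _ _)
  have hss : ∑ j ∈ Finset.Icc (1:ℤ) (n:ℤ), (s (n:ℤ) - s j)
      = (n:ℤ) * s (n:ℤ) - ∑ j ∈ Finset.Icc (1:ℤ) (n:ℤ), s j := by
    rw [Finset.sum_sub_distrib, Finset.sum_const, Int.card_Icc, nsmul_eq_mul]
    congr 2
    omega
  have hIdsum : ∑ i ∈ Finset.Icc (1:ℤ) (n:ℤ), i = (∑ k ∈ Finset.range n, (k:ℤ)) + n := by
    rw [sum_window n (fun i => i), Finset.sum_add_distrib, Finset.sum_const, Finset.card_range,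
      nsmul_eq_mul]
    ring
  have hG : 2 * (∑ k ∈ Finset.range n, (k:ℤ)) = (n:ℤ) * n - n := by
    have := gauss_int n
    have h2 : (n:ℤ) * ((n:ℤ) - 1) = (n:ℤ)*n - n := by ring
    omega
  set D := ∑ j ∈ Finset.Icc (1:ℤ) (n:ℤ), (s (n:ℤ) - s j) / n with hD
  set T := ∑ k ∈ Finset.range n, (k:ℤ) with hT
  set S := ∑ j ∈ Finset.Icc (1:ℤ) (n:ℤ), s j with hS
  rw [hA, hFD, hIdsum]
  constructor
  · intro h
    have hND : (n:ℤ) * D = (n:ℤ) * s (n:ℤ) - (n:ℤ)*(n:ℤ) := by rw [h]; ring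
    omega
  · intro h
    have hND : (n:ℤ) * D = (n:ℤ) * (s (n:ℤ) - (n:ℤ)) := by
      have : (n:ℤ) * (s (n:ℤ) - n) = (n:ℤ) * s (n:ℤ) - n*n := by ring
      omega
    exact mul_left_cancel₀ (by omega : (n:ℤ) ≠ 0) hND

lemma dvd_small (n : ℕ) (a : ℤ) (h : (n:ℤ) ∣ a) (h1 : -(n:ℤ) < a) (h2 : a < n) : a = 0 := by
  obtain ⟨m, rfl⟩ := h
  have hn0 : (0:ℤ) ≤ n := by positivity
  rcases lt_trichotomy m 0 with hm | hm | hm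
  · have : (n:ℤ)*m ≤ n*(-1) := mul_le_mul_of_nonneg_left (by omega) hn0
    omega
  · simp [hm]
  · have : (n:ℤ)*1 ≤ n*m := mul_le_mul_of_nonneg_left (by omega) hn0
    omega

lemma modeq_bounded (n : ℕ) (a b : ℤ) (h : a ≡ b [ZMOD (n:ℤ)]) (h1 : -(n:ℤ) < a - b)
    (h2 : a - b < n) : a = b := by
  have hd : (n:ℤ) ∣ (a - b) := (Int.ModEq.dvd h.symm)
  have := dvd_small n (a - b) hd h1 h2
  omega

lemma hypercube_pointwise (n : ℕ) (hn : 2 ≤ n) (s : ℤ → ℤ)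
    (hmono : ∀ i : ℤ, 1 ≤ i → i < (n:ℤ) → s i < s (i+1))
    (hdist : ∀ j k : ℤ, 1 ≤ j → j ≤ (n:ℤ) → 1 ≤ k → k ≤ (n:ℤ) →
      s j ≡ s k [ZMOD (n:ℤ)] → j = k)
    (i : ℤ) (hi1 : 1 ≤ i) (hi2 : i < (n:ℤ)) :
    s (i+1) < s i + n ↔ (gam n s i : ℤ) ≤ i - 1 := by
  have hnpos : (0:ℤ) < n := by omega
  have hn0 : 0 < n := by omega
  have hii : s i < s (i+1) := hmono i hi1 hi2
  have hgam : gam n s i = ((Finset.Ioo (s i) (s (i+1))).filter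
      (fun t => t ∈ Rset n s i)).card := by
    rw [gam_eq, ncard_inter_Ioo]
  constructor
  · intro hlt
    -- map each counted t to its residue index k ∈ [1, i-1]
    have hcard : ((Finset.Ioo (s i) (s (i+1))).filter (fun t => t ∈ Rset n s i)).card
        ≤ (Finset.Icc (1:ℤ) (i-1)).card := by
      apply Finset.card_le_card_of_injOn
        (fun t => Classical.choose (window_complete n hn0 s hdist t))
      · intro t ht
        simp only [Finset.mem_coe, Finset.mem_filter, Finset.mem_Ioo] at ht
        obtain ⟨⟨ht1, ht2⟩, htR⟩ := ht
        obtain ⟨hk1, hk2, hk3⟩ :=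
          Classical.choose_spec (window_complete n hn0 s hdist t)
        set k := Classical.choose (window_complete n hn0 s hdist t)
        simp only [Finset.mem_coe, Finset.mem_Icc]
        have hki : k ≤ i := by
          by_contra hcon
          exact htR k (by omega) hk2 hk3
        have hkne : k ≠ i := by
          intro heq
          have : t = s i := modeq_bounded n t (s i) (heq ▸ hk3) (by omega) (by omega)
          omega
        exact ⟨hk1, by omega⟩
      · intro t ht t' ht' heq
        simp only [Finset.coe_filter, Set.mem_setOf_eq, Finset.mem_Ioo] at ht ht'
        obtain ⟨hk1, hk2, hk3⟩ :=
          Classical.choose_spec (window_complete n hn0 s hdist t)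
        obtain ⟨hk1', hk2', hk3'⟩ :=
          Classical.choose_spec (window_complete n hn0 s hdist t')
        have heq2 : Classical.choose (window_complete n hn0 s hdist t)
            = Classical.choose (window_complete n hn0 s hdist t') := heq
        rw [heq2] at hk3
        exact modeq_bounded n t t' (hk3.trans hk3'.symm) (by omega) (by omega)
    rw [Int.card_Icc] at hcard
    rw [hgam]
    omega
  · intro hle
    by_contra hcon
    push_neg at hcon
    -- in fact strict: s i + n < s (i+1)
    have hstrict : s i + n < s (i+1) := by
      rcases eq_or_lt_of_le hcon with heq | hlt
      · exfalso
        have : s i ≡ s (i+1) [ZMOD (n:ℤ)] := by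
          rw [← heq]
          exact ((modeq_add_n n (s i) (s i)).mpr (Int.ModEq.refl _)).symm
        have := hdist i (i+1) (by omega) (by omega) (by omega) (by omega) this
        omega
      · exact hlt
    have hcard : (Finset.Icc (1:ℤ) i).card
        ≤ ((Finset.Ioo (s i) (s (i+1))).filter (fun t => t ∈ Rset n s i)).card := by
      apply Finset.card_le_card_of_injOn
        (fun k => if k = i then s i + n else s i + (s k - s i) % n)
      · intro k hk
        simp only [Finset.mem_coe, Finset.mem_Icc] at hk
        have hmodeq : (if k = i then s i + n else s i + (s k - s i) % n) ≡ s k [ZMOD (n:ℤ)] := by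
          by_cases hki : k = i
          · simp only [hki, if_pos]
            exact (modeq_add_n n (s i) (s i)).mpr (Int.ModEq.refl _)
          · simp only [hki, if_neg, if_false]
            have h1 : (s k - s i) % n ≡ s k - s i [ZMOD (n:ℤ)] :=
              Int.emod_emod_of_dvd _ dvd_rfl
            have h2 := Int.ModEq.add_left (s i) h1
            have h3 : s i + (s k - s i) = s k := by ring
            rwa [h3] at h2
        have hbounds : s i < (if k = i then s i + n else s i + (s k - s i) % n) ∧
            (if k = i then s i + n else s i + (s k - s i) % n) < s (i+1) := by
          by_cases hki : k = i
          · simp only [hki, if_pos]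
            omega
          · simp only [hki, if_neg, if_false]
            have h1 : 0 ≤ (s k - s i) % n := Int.emod_nonneg _ (by omega)
            have h2 : (s k - s i) % n < n := Int.emod_lt_of_pos _ hnpos
            have h3 : (s k - s i) % n ≠ 0 := by
              intro h0
              have hd : (n:ℤ) ∣ (s k - s i) := Int.dvd_of_emod_eq_zero h0
              have : s k ≡ s i [ZMOD (n:ℤ)] := (Int.modEq_iff_dvd.mpr (by omega)).symm
              have := hdist k i hk.1 (by omega) (by omega) (by omega) this
              omega
            omega
        simp only [Finset.mem_coe, Finset.mem_filter, Finset.mem_Ioo]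
        refine ⟨hbounds, ?_⟩
        intro m hm1 hm2 hcon2
        have : s k ≡ s m [ZMOD (n:ℤ)] := hmodeq.symm.trans hcon2
        have := hdist k m hk.1 (by omega) (by omega) hm2 this
        omega
      · intro k hk k' hk' heq
        simp only [Finset.coe_Icc, Set.mem_Icc] at hk hk'
        have hmodeq : ∀ j : ℤ, 1 ≤ j → j ≤ i →
            (if j = i then s i + n else s i + (s j - s i) % n) ≡ s j [ZMOD (n:ℤ)] := by
          intro j hj1 hj2
          by_cases hji : j = i
          · simp only [hji, if_pos]
            exact (modeq_add_n n (s i) (s i)).mpr (Int.ModEq.refl _)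
          · simp only [hji, if_neg, if_false]
            have h1 : (s j - s i) % n ≡ s j - s i [ZMOD (n:ℤ)] :=
              Int.emod_emod_of_dvd _ dvd_rfl
            have h2 := Int.ModEq.add_left (s i) h1
            have h3 : s i + (s j - s i) = s j := by ring
            rwa [h3] at h2
        have h1 := hmodeq k hk.1 hk.2
        have h2 := hmodeq k' hk'.1 hk'.2
        have heq' : (if k = i then s i + (n:ℤ) else s i + (s k - s i) % n)
            = (if k' = i then s i + (n:ℤ) else s i + (s k' - s i) % n) := heq
        rw [heq'] at h1
        exact hdist k k' hk.1 (by omega) (by omega) (by omega) (h1.symm.trans h2)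
    rw [Int.card_Icc] at hcard
    rw [hgam] at hle
    omega

lemma affperm_shift (n : ℕ) (s : ℤ → ℤ) (hper : ∀ i : ℤ, s (i + n) = s i + n) :
    ∀ (i m : ℤ), s (i + n * m) = s i + n * m := by
  intro i m
  induction m using Int.induction_on with
  | zero => simp
  | succ k ih =>
    rw [show i + (n:ℤ)*(k+1) = (i + n*k) + n by ring, hper, ih]
    ring
  | pred k ih =>
    have h2 : i + (n:ℤ)*(-k) = (i + n*(-k-1)) + n := by ring
    rw [h2, hper] at ih
    have h3 : s (i + (n:ℤ)*(-k-1)) = s i + n*(-k) - n := by omega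
    rw [h3]
    ring

lemma affperm_dist (n : ℕ) (hn : 1 ≤ n) (s : ℤ → ℤ) (hinj : Function.Injective s)
    (hper : ∀ i : ℤ, s (i + n) = s i + n) :
    ∀ j k : ℤ, 1 ≤ j → j ≤ (n:ℤ) → 1 ≤ k → k ≤ (n:ℤ) →
      s j ≡ s k [ZMOD (n:ℤ)] → j = k := by
  intro j k hj1 hj2 hk1 hk2 h
  obtain ⟨m, hm⟩ := Int.ModEq.dvd h
  have : s k = s (j + n * m) := by rw [affperm_shift n s hper]; omega
  have hk : k = j + n*m := hinj this
  have := dvd_small n (k - j) ⟨m, by omega⟩ (by omega) (by omega)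
  omega

lemma window_decomp (n : ℕ) (hn : 1 ≤ n) (t : ℤ) :
    ∃ (k m : ℤ), 1 ≤ k ∧ k ≤ (n:ℤ) ∧ t = k + n * m := by
  refine ⟨(t-1) % n + 1, (t-1) / n, ?_, ?_, ?_⟩
  · have := Int.emod_nonneg (t-1) (by omega : (n:ℤ) ≠ 0)
    omega
  · have := Int.emod_lt_of_pos (t-1) (by omega : (0:ℤ) < n)
    omega
  · have := Int.mul_ediv_add_emod (t-1) (n:ℤ)
    omega

lemma mem_Rset_self (n : ℕ) (s : ℤ → ℤ)
    (hdist : ∀ j k : ℤ, 1 ≤ j → j ≤ (n:ℤ) → 1 ≤ k → k ≤ (n:ℤ) →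
      s j ≡ s k [ZMOD (n:ℤ)] → j = k)
    (i : ℤ) (hi1 : 1 ≤ i) (hi2 : i ≤ (n:ℤ)) : s i ∈ Rset n s i := by
  intro m h1 h2 hc
  have := hdist i m hi1 hi2 (by omega) h2 hc
  omega

lemma gamma_inj (n : ℕ) (hn : 2 ≤ n) (s s' : ℤ → ℤ)
    (hs : IsAffPerm n s) (hds : IsDominant n s)
    (hs' : IsAffPerm n s') (hds' : IsDominant n s')
    (hg : ∀ i : ℤ, 1 ≤ i → i ≤ (n:ℤ)-1 → gam n s i = gam n s' i) : s = s' := by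
  obtain ⟨hbij, hper, hsum⟩ := hs
  obtain ⟨hbij', hper', hsum'⟩ := hs'
  have hdist := affperm_dist n (by omega) s hbij.1 hper
  have hdist' := affperm_dist n (by omega) s' hbij'.1 hper'
  have hsumg : ∑ i ∈ Finset.Icc (1:ℤ) ((n:ℤ)-1), (gam n s i : ℤ)
      = ∑ i ∈ Finset.Icc (1:ℤ) ((n:ℤ)-1), (gam n s' i : ℤ) := by
    apply Finset.sum_congr rfl
    intro i hi
    simp only [Finset.mem_Icc] at hi
    rw [hg i hi.1 hi.2]
  have h1 := (sum_gamma_iff n hn s hds hdist).mpr hsum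
  have h2 := (sum_gamma_iff n hn s' hds' hdist').mpr hsum'
  have hsn : s (n:ℤ) = s' (n:ℤ) := by omega
  have hwin : ∀ j : ℕ, (j:ℤ) ≤ (n:ℤ) - 1 → ∀ k : ℤ, (n:ℤ) - j ≤ k → k ≤ (n:ℤ) → s k = s' k := by
    intro j
    induction j with
    | zero =>
      intro _ k hk1 hk2
      have : k = (n:ℤ) := by push_cast at hk1; omega
      rw [this]
      exact hsn
    | succ p ih =>
      intro hj k hk1 hk2
      have hj' : (p:ℤ) ≤ (n:ℤ) - 1 := by push_cast at hj; omega
      by_cases hk : (n:ℤ) - p ≤ k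
      · exact ih hj' k hk hk2
      · have hkeq : k = (n:ℤ) - p - 1 := by push_cast at hk1; omega
        have hk1' : 1 ≤ k := by push_cast at hj; omega
        have hk2' : k ≤ (n:ℤ) - 1 := by omega
        have hReq : Rset n s k = Rset n s' k := by
          unfold Rset
          ext t
          simp only [Set.mem_setOf_eq]
          constructor
          · intro h m h1 h2
            rw [← ih hj' m (by omega) h2]
            exact h m h1 h2
          · intro h m h1 h2
            rw [ih hj' m (by omega) h2]
            exact h m h1 h2
        have hb : s (k+1) = s' (k+1) := ih hj' (k+1) (by omega) (by omega)
        have hu := key_existsUnique n (by omega) (Rset n s k) (Rset_periodic n s k)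
          ⟨s k, mem_Rset_self n s hdist k hk1' (by omega)⟩ (s (k+1)) (gam n s k)
        apply ExistsUnique.unique hu
        · exact ⟨mem_Rset_self n s hdist k hk1' (by omega), hds k hk1' (by omega),
            (gam_eq n s k).symm⟩
        · refine ⟨?_, ?_, ?_⟩
          · rw [hReq]
            exact mem_Rset_self n s' hdist' k hk1' (by omega)
          · rw [hb]
            exact hds' k hk1' (by omega)
          · rw [hReq, hb, ← gam_eq n s' k]
            exact (hg k hk1' hk2').symm
  funext t
  obtain ⟨k, m, hk1, hk2, rfl⟩ := window_decomp n (by omega) t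
  rw [affperm_shift n s hper, affperm_shift n s' hper']
  have hj : ((((n:ℤ) - k).toNat : ℤ)) ≤ (n:ℤ) - 1 := by omega
  rw [hwin ((n:ℤ) - k).toNat hj k (by omega) hk2]

lemma avoid_classes (n : ℕ) (hn : 1 ≤ n) (p : ℕ) (hp : p + 1 < n) (a : ℕ → ℤ)
    (hdista : ∀ u v : ℕ, u < v → v ≤ p → ¬ a v ≡ a u [ZMOD (n:ℤ)]) :
    ∃ t : ℤ, ∀ u : ℕ, u ≤ p → ¬ t ≡ a u [ZMOD (n:ℤ)] := by
  have hnpos : (0:ℤ) < n := by exact_mod_cast hn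
  have hinj : ∀ x ∈ Finset.range (p+1), ∀ y ∈ Finset.range (p+1),
      a x % n = a y % n → x = y := by
    intro x hx y hy h
    simp only [Finset.mem_range] at hx hy
    by_contra hne
    rcases lt_or_gt_of_ne hne with hlt | hlt
    · exact hdista x y hlt (by omega) h.symm
    · exact hdista y x hlt (by omega) h
  have hsubset : (Finset.range (p+1)).image (fun u => a u % n) ⊆ Finset.Ico (0:ℤ) (n:ℤ) := by
    intro x hx
    simp only [Finset.mem_image] at hx
    obtain ⟨u, _, rfl⟩ := hx
    simp only [Finset.mem_Ico]
    exact ⟨Int.emod_nonneg _ (by omega), Int.emod_lt_of_pos _ hnpos⟩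
  have hcardlt : ((Finset.range (p+1)).image (fun u => a u % n)).card
      < (Finset.Ico (0:ℤ) (n:ℤ)).card := by
    rw [Finset.card_image_of_injOn (fun x hx y hy h => hinj x hx y hy h), Finset.card_range,
      Int.card_Ico]
    omega
  have hex : ∃ r ∈ Finset.Ico (0:ℤ) (n:ℤ),
      r ∉ (Finset.range (p+1)).image (fun u => a u % n) := by
    by_contra hcon
    push_neg at hcon
    have := Finset.card_le_card hcon
    omega
  obtain ⟨r, hrI, hrim⟩ := hex
  simp only [Finset.mem_Ico] at hrI
  refine ⟨r, fun u hu hcon => ?_⟩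
  apply hrim
  simp only [Finset.mem_image]
  refine ⟨u, Finset.mem_range.mpr (by omega), ?_⟩
  have h1 : r % n = a u % n := hcon
  have h2 : r % n = r := Int.emod_eq_of_lt hrI.1 hrI.2
  omega

noncomputable def Afun (n : ℕ) (g : ℕ → ℕ) : ℕ → ℕ → ℤ
  | 0 => fun _ => (n : ℤ) + ∑ i ∈ Finset.range (n-1), (g i : ℤ)
  | (j+1) => fun m => if m ≤ j then Afun n g j m else
      pickX {t : ℤ | ∀ u : ℕ, u ≤ j → ¬ t ≡ Afun n g j u [ZMOD (n:ℤ)]}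
        (Afun n g j j) (g (n-2-j))

noncomputable def Aval (n : ℕ) (g : ℕ → ℕ) (m : ℕ) : ℤ := Afun n g m m

lemma Afun_stable (n : ℕ) (g : ℕ → ℕ) : ∀ j m : ℕ, m ≤ j → Afun n g j m = Aval n g m := by
  intro j
  induction j with
  | zero => intro m hm; rw [Nat.le_zero.mp hm]; rfl
  | succ p ih =>
    intro m hm
    by_cases h : m ≤ p
    · rw [show Afun n g (p+1) m = Afun n g p m by simp [Afun, h], ih m h]
    · have : m = p + 1 := by omega
      rw [this]
      rfl

lemma Aval_step (n : ℕ) (g : ℕ → ℕ) (j : ℕ) :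
    Aval n g (j+1) = pickX {t : ℤ | ∀ u : ℕ, u ≤ j → ¬ t ≡ Aval n g u [ZMOD (n:ℤ)]}
      (Aval n g j) (g (n-2-j)) := by
  have h1 : Aval n g (j+1) = pickX {t : ℤ | ∀ u : ℕ, u ≤ j → ¬ t ≡ Afun n g j u [ZMOD (n:ℤ)]}
      (Afun n g j j) (g (n-2-j)) := by
    simp [Aval, Afun]
  rw [h1]
  congr 1
  · ext t
    simp only [Set.mem_setOf_eq]
    constructor
    · intro h u hu
      rw [← Afun_stable n g j u hu]
      exact h u hu
    · intro h u hu
      rw [Afun_stable n g j u hu]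
      exact h u hu

lemma Aval_spec (n : ℕ) (hn : 2 ≤ n) (g : ℕ → ℕ) :
    ∀ j : ℕ, j ≤ n - 1 →
      (∀ u v : ℕ, u < v → v ≤ j → Aval n g v < Aval n g u) ∧
      (∀ u v : ℕ, u < v → v ≤ j → ¬ Aval n g v ≡ Aval n g u [ZMOD (n:ℤ)]) ∧
      (∀ v : ℕ, 1 ≤ v → v ≤ j →
        ({t : ℤ | ∀ u : ℕ, u ≤ v - 1 → ¬ t ≡ Aval n g u [ZMOD (n:ℤ)]}
          ∩ Set.Ioo (Aval n g v) (Aval n g (v-1))).ncard = g (n-1-v)) := by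
  intro j
  induction j with
  | zero => exact fun _ => ⟨fun u v h1 h2 => by omega, fun u v h1 h2 => by omega,
      fun v h1 h2 => by omega⟩
  | succ p ih =>
    intro hj
    obtain ⟨ih1, ih2, ih3⟩ := ih (by omega)
    set R := {t : ℤ | ∀ u : ℕ, u ≤ p → ¬ t ≡ Aval n g u [ZMOD (n:ℤ)]} with hR
    have hper : ∀ t : ℤ, t ∈ R ↔ t + n ∈ R := by
      intro t
      simp only [hR, Set.mem_setOf_eq]
      constructor
      · intro h u hu
        rw [modeq_add_n]
        exact h u hu
      · intro h u hu
        have := h u hu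
        rwa [modeq_add_n] at this
    have hne : R.Nonempty := by
      obtain ⟨t, ht⟩ := avoid_classes n (by omega) p (by omega) (Aval n g)
        (fun u v h1 h2 => ih2 u v h1 h2)
      exact ⟨t, ht⟩
    have hp := pickX_spec n (by omega) R hper hne (Aval n g p) (g (n-2-p))
    rw [← Aval_step n g p] at hp
    obtain ⟨hmem, hlt, hcount⟩ := hp
    refine ⟨?_, ?_, ?_⟩
    · intro u v h1 h2
      by_cases hv : v ≤ p
      · exact ih1 u v h1 hv
      · have hveq : v = p + 1 := by omega
        subst hveq
        by_cases hu : u = p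
        · rw [hu]; exact hlt
        · exact lt_trans hlt (ih1 u p (by omega) le_rfl)
    · intro u v h1 h2
      by_cases hv : v ≤ p
      · exact ih2 u v h1 hv
      · have hveq : v = p + 1 := by omega
        subst hveq
        exact hmem u (by omega)
    · intro v h1 h2
      by_cases hv : v ≤ p
      · exact ih3 v h1 hv
      · have hveq : v = p + 1 := by omega
        subst hveq
        have e1 : p + 1 - 1 = p := by omega
        have e2 : n - 1 - (p+1) = n - 2 - p := by omega
        rw [e1, e2]
        exact hcount

noncomputable def sFun (n : ℕ) (g : ℕ → ℕ) (t : ℤ) : ℤ :=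
  Aval n g (n - 1 - ((t-1) % n).toNat) + n * ((t-1) / n)

lemma sFun_window (n : ℕ) (hn : 1 ≤ n) (g : ℕ → ℕ) (k : ℤ) (h1 : 1 ≤ k) (h2 : k ≤ (n:ℤ)) :
    sFun n g k = Aval n g (n - k.toNat) := by
  have e1 : (k-1) % n = k - 1 := Int.emod_eq_of_lt (by omega) (by omega)
  have e2 : (k-1) / n = 0 := Int.ediv_eq_zero_of_lt (by omega) (by omega)
  rw [sFun, e1, e2]
  have e3 : n - 1 - (k-1).toNat = n - k.toNat := by omega
  rw [e3]
  ring

lemma sFun_periodic (n : ℕ) (hn : 1 ≤ n) (g : ℕ → ℕ) (i : ℤ) :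
    sFun n g (i + n) = sFun n g i + n := by
  have e0a : i + (n:ℤ) - 1 = (i - 1) + n * 1 := by ring
  have e0b : i + (n:ℤ) - 1 = (i - 1) + 1 * n := by ring
  have e1 : (i + n - 1) % n = (i-1) % n := by
    rw [e0a, Int.add_mul_emod_self_left]
  have e2 : (i + n - 1) / n = (i-1)/n + 1 := by
    rw [e0b, Int.add_mul_ediv_right _ _ (by omega : (n:ℤ) ≠ 0)]
  rw [sFun, sFun, e1, e2]
  ring

lemma sFun_mono (n : ℕ) (hn : 2 ≤ n) (g : ℕ → ℕ) :
    ∀ i : ℤ, 1 ≤ i → i < (n:ℤ) → sFun n g i < sFun n g (i+1) := by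
  intro i hi1 hi2
  obtain ⟨hdec, -, -⟩ := Aval_spec n hn g (n-1) le_rfl
  rw [sFun_window n (by omega) g i (by omega) (by omega),
    sFun_window n (by omega) g (i+1) (by omega) (by omega)]
  have e : (i+1).toNat = i.toNat + 1 := by omega
  rw [e]
  exact hdec (n - (i.toNat+1)) (n - i.toNat) (by omega) (by omega)

lemma sFun_dist (n : ℕ) (hn : 2 ≤ n) (g : ℕ → ℕ) :
    ∀ j k : ℤ, 1 ≤ j → j ≤ (n:ℤ) → 1 ≤ k → k ≤ (n:ℤ) →
      sFun n g j ≡ sFun n g k [ZMOD (n:ℤ)] → j = k := by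
  intro j k hj1 hj2 hk1 hk2 h
  obtain ⟨-, hdist, -⟩ := Aval_spec n hn g (n-1) le_rfl
  rw [sFun_window n (by omega) g j hj1 hj2, sFun_window n (by omega) g k hk1 hk2] at h
  by_contra hne
  have hne' : n - j.toNat ≠ n - k.toNat := by omega
  rcases lt_or_gt_of_ne hne' with hlt | hlt
  · exact hdist (n - j.toNat) (n - k.toNat) hlt (by omega) h.symm
  · exact hdist (n - k.toNat) (n - j.toNat) hlt (by omega) h

lemma sFun_bijective (n : ℕ) (hn : 2 ≤ n) (g : ℕ → ℕ) : Function.Bijective (sFun n g) := by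
  obtain ⟨-, hdistA, -⟩ := Aval_spec n hn g (n-1) le_rfl
  constructor
  · intro t t' heq
    have hb : ∀ u : ℤ, 0 ≤ (u-1) % n ∧ (u-1) % n < n ∧ (n:ℤ) * ((u-1)/n) + (u-1) % n = u - 1 :=
      fun u => ⟨Int.emod_nonneg _ (by omega), Int.emod_lt_of_pos _ (by omega : (0:ℤ) < n),
        Int.mul_ediv_add_emod _ _⟩
    obtain ⟨hb1, hb2, hb3⟩ := hb t
    obtain ⟨hb1', hb2', hb3'⟩ := hb t'
    have hmod : sFun n g t ≡ Aval n g (n - 1 - ((t-1) % n).toNat) [ZMOD (n:ℤ)] :=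
      Int.add_mul_emod_self_left ..
    have hmod' : sFun n g t' ≡ Aval n g (n - 1 - ((t'-1) % n).toNat) [ZMOD (n:ℤ)] :=
      Int.add_mul_emod_self_left ..
    have hidx : n - 1 - ((t-1) % n).toNat = n - 1 - ((t'-1) % n).toNat := by
      by_contra hne
      have h3 : Aval n g (n - 1 - ((t-1) % n).toNat)
          ≡ Aval n g (n - 1 - ((t'-1) % n).toNat) [ZMOD (n:ℤ)] :=
        (hmod.symm.trans (heq ▸ hmod'))
      rcases lt_or_gt_of_ne hne with hlt | hlt
      · exact hdistA _ _ hlt (by omega) h3.symm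
      · exact hdistA _ _ hlt (by omega) h3
    have hr : (t-1) % n = (t'-1) % n := by omega
    have hq : (t-1)/n = (t'-1)/n := by
      have h5 : sFun n g t = sFun n g t' := heq
      rw [sFun, sFun, hidx] at h5
      have h4 : (n:ℤ) * ((t-1)/n) = n * ((t'-1)/n) := by omega
      exact mul_left_cancel₀ (by omega : (n:ℤ) ≠ 0) h4
    have h6 : (n:ℤ) * ((t-1)/n) = n * ((t'-1)/n) := by rw [hq]
    omega
  · intro y
    obtain ⟨k, hk1, hk2, hmod⟩ := window_complete n (by omega) (sFun n g)
      (sFun_dist n hn g) y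
    obtain ⟨m0, hm0⟩ := Int.ModEq.dvd hmod
    refine ⟨k + n * (-m0), ?_⟩
    rw [affperm_shift n (sFun n g) (sFun_periodic n (by omega) g)]
    have : (n:ℤ) * (-m0) = -((n:ℤ) * m0) := by ring
    omega

lemma sFun_gam (n : ℕ) (hn : 2 ≤ n) (g : ℕ → ℕ) (i : ℤ) (hi1 : 1 ≤ i) (hi2 : i ≤ (n:ℤ)-1) :
    gam n (sFun n g) i = g (i.toNat - 1) := by
  have hv1 : 1 ≤ n - i.toNat := by omega
  have hv2 : n - i.toNat ≤ n - 1 := by omega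
  have hsi : sFun n g i = Aval n g (n - i.toNat) :=
    sFun_window n (by omega) g i hi1 (by omega)
  have hsi1 : sFun n g (i+1) = Aval n g (n - i.toNat - 1) := by
    rw [sFun_window n (by omega) g (i+1) (by omega) (by omega)]
    congr 1
    omega
  have hRset : Rset n (sFun n g) i
      = {t : ℤ | ∀ u : ℕ, u ≤ (n - i.toNat) - 1 → ¬ t ≡ Aval n g u [ZMOD (n:ℤ)]} := by
    ext t
    simp only [Rset, Set.mem_setOf_eq]
    constructor
    · intro h u hu
      have hk : sFun n g ((n:ℤ) - u) = Aval n g u := by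
        rw [sFun_window n (by omega) g ((n:ℤ) - u) (by omega) (by omega)]
        congr 1
        omega
      rw [← hk]
      exact h ((n:ℤ) - u) (by omega) (by omega)
    · intro h k hk1 hk2
      have hk : sFun n g k = Aval n g (n - k.toNat) :=
        sFun_window n (by omega) g k (by omega) hk2
      rw [hk]
      exact h (n - k.toNat) (by omega)
  rw [gam_eq, hRset, hsi, hsi1]
  obtain ⟨-, -, hcnt⟩ := Aval_spec n hn g (n-1) le_rfl
  rw [hcnt (n - i.toNat) hv1 hv2]
  congr 1
  omega

lemma sFun_sum (n : ℕ) (hn : 2 ≤ n) (g : ℕ → ℕ) :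
    ∑ i ∈ Finset.Icc (1:ℤ) (n:ℤ), sFun n g i = ∑ i ∈ Finset.Icc (1:ℤ) (n:ℤ), i := by
  apply (sum_gamma_iff n hn (sFun n g) (sFun_mono n hn g) (sFun_dist n hn g)).mp
  have h1 : ∑ i ∈ Finset.Icc (1:ℤ) ((n:ℤ)-1), (gam n (sFun n g) i : ℤ)
      = ∑ i ∈ Finset.Icc (1:ℤ) ((n:ℤ)-1), (g (i.toNat - 1) : ℤ) := by
    apply Finset.sum_congr rfl
    intro i hi
    simp only [Finset.mem_Icc] at hi
    rw [sFun_gam n hn g i hi.1 hi.2]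
  rw [h1]
  have h2 : ((n:ℤ) - 1) = ((n-1 : ℕ) : ℤ) := by omega
  rw [h2, sum_window (n-1) (fun i => (g (i.toNat - 1) : ℤ))]
  have h3 : ∑ k ∈ Finset.range (n-1), (g ((1 + (k:ℤ)).toNat - 1) : ℤ)
      = ∑ k ∈ Finset.range (n-1), (g k : ℤ) := by
    apply Finset.sum_congr rfl
    intro k _
    congr 2
    omega
  rw [h3]
  have h4 : sFun n g (n:ℤ) = Aval n g 0 := by
    rw [sFun_window n (by omega) g (n:ℤ) (by omega) le_rfl]
    congr 1
    omega
  have h5 : Aval n g 0 = (n : ℤ) + ∑ i ∈ Finset.range (n-1), (g i : ℤ) := rfl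
  rw [h4, h5]
  ring

/-- The map `s ↦ (γ_1(s), …, γ_{n-1}(s))` is a bijection from the dominant elements of
the affine symmetric group onto `ℕ^{n-1}`; moreover a dominant `s` lies in the unit
hypercube (i.e. `s(i) + n > s(i+1)` for `1 ≤ i ≤ n-1`) if and only if `γ_i(s) ≤ i-1`
for all such `i`. -/
theorem gamma_bijection_and_hypercube (n : ℕ) (hn : 2 ≤ n) :
    Function.Bijective
      (fun s : {f : ℤ → ℤ // IsAffPerm n f ∧ IsDominant n f} =>
        fun k : Fin (n - 1) => gam n s.1 (((k : ℕ) : ℤ) + 1)) ∧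
    ∀ s : ℤ → ℤ, IsAffPerm n s → IsDominant n s →
      ((∀ i : ℤ, 1 ≤ i → i < (n : ℤ) → s (i + 1) < s i + n) ↔
       (∀ i : ℤ, 1 ≤ i → i < (n : ℤ) → (gam n s i : ℤ) ≤ i - 1)) := by
  constructor
  · constructor
    · intro s₁ s₂ h
      apply Subtype.ext
      apply gamma_inj n hn s₁.1 s₂.1 s₁.2.1 s₁.2.2 s₂.2.1 s₂.2.2
      intro i hi1 hi2
      have hk : (i - 1).toNat < n - 1 := by omega
      have h2 : gam n s₁.1 ((((i-1).toNat : ℕ) : ℤ) + 1)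
          = gam n s₂.1 ((((i-1).toNat : ℕ) : ℤ) + 1) := congrFun h ⟨(i-1).toNat, hk⟩
      have e : ((((i-1).toNat : ℕ)) : ℤ) + 1 = i := by omega
      rwa [e] at h2
    · intro G
      set g : ℕ → ℕ := fun u => if h : u < n - 1 then G ⟨u, h⟩ else 0 with hg
      refine ⟨⟨sFun n g, ⟨sFun_bijective n hn g, sFun_periodic n (by omega) g,
        sFun_sum n hn g⟩, sFun_mono n hn g⟩, ?_⟩
      funext k
      have e1 : (1:ℤ) ≤ ((k:ℕ):ℤ) + 1 := by omega
      have e2 : ((k:ℕ):ℤ) + 1 ≤ (n:ℤ) - 1 := by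
        have := k.isLt
        omega
      show gam n (sFun n g) (((k:ℕ):ℤ)+1) = G k
      rw [sFun_gam n hn g _ e1 e2]
      have e3 : ((((k:ℕ):ℤ)+1).toNat - 1) = (k:ℕ) := by omega
      rw [e3, hg]
      simp only [Fin.is_lt, dif_pos, Fin.eta]
  · intro s haff hdom
    have hdist := affperm_dist n (by omega) s haff.1.1 haff.2.1
    constructor
    · intro h i hi1 hi2
      exact (hypercube_pointwise n hn s hdom hdist i hi1 hi2).mp (h i hi1 hi2)
    · intro h i hi1 hi2
      exact (hypercube_pointwise n hn s hdom hdist i hi1 hi2).mpr (h i hi1 hi2)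
end

section
/- Let n ≥ 2 and let d be a natural number. The number of dominant elements s of S̃_n satisfying s(i) + n > s(i+1) for all 1 ≤ i ≤ n-1 and inv(s) = d equals the number of functions γ : {1, …, n-1} → ℕ with γ(i) ≤ i-1 for all i and Σ_{i=1}^{n-1} (n-i)·γ(i) = d. (Consequently, the Hilbert series of the triangulated unit hypercube in type Ã_{n-1} is ∏_{i=1}^{n-1} (1 + t^{n-i} + t^{2(n-i)} + ⋯ + t^{(i-1)(n-i)}).) -/
namespace Hyp

/-- window of n consecutive integers below `x` with residue not in `F`. -/
noncomputable def winF (n : ℕ) (F : Finset ℤ) (x : ℤ) : Finset ℤ :=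
  (Finset.Ico (x - (n:ℤ)) x).filter (fun t => t % (n:ℤ) ∉ F)

/-- the largest integer `< x` with residue not in `F` (junk value if none). -/
noncomputable def prev (n : ℕ) (F : Finset ℤ) (x : ℤ) : ℤ :=
  if h : (winF n F x).Nonempty then (winF n F x).max' h else x - 1

variable {n : ℕ} {F : Finset ℤ}

lemma winF_card (hn : 0 < n) (hF : F ⊆ Finset.Ico (0:ℤ) (n:ℤ)) (x : ℤ) :
    (winF n F x).card = n - F.card := by
  have key : (winF n F x).card = ((Finset.Ico (0:ℤ) (n:ℤ)) \ F).card := by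
    apply Finset.card_nbij (i := fun t => t % (n:ℤ))
    · intro t ht
      simp only [Finset.mem_coe, winF, Finset.mem_filter, Finset.mem_Ico] at ht
      simp only [Finset.mem_coe, Finset.mem_sdiff, Finset.mem_Ico]
      exact ⟨⟨Int.emod_nonneg t (by positivity), Int.emod_lt_of_pos t (by positivity)⟩, ht.2⟩
    · intro a ha b hb hab
      simp only [winF, Finset.coe_filter, Set.mem_setOf_eq, Finset.mem_Ico] at ha hb
      obtain ⟨c, hc⟩ := Int.ModEq.dvd (hab : a % (n:ℤ) = b % (n:ℤ))
      have hc' : c = 0 := by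
        rcases lt_trichotomy c 0 with h|h|h
        · nlinarith [ha.1.1, ha.1.2, hb.1.1, hb.1.2]
        · exact h
        · nlinarith [ha.1.1, ha.1.2, hb.1.1, hb.1.2]
      rw [hc', mul_zero] at hc; omega
    · intro r hr
      simp only [Finset.coe_sdiff, Set.mem_diff, Finset.mem_coe, Finset.mem_Ico] at hr
      have h1 : 0 ≤ (x - 1 - r) % (n:ℤ) := Int.emod_nonneg _ (by positivity)
      have h2 : (x - 1 - r) % (n:ℤ) < n := Int.emod_lt_of_pos _ (by positivity)
      have h4 : (x - 1 - ((x - 1 - r) % (n:ℤ))) % (n:ℤ) = r % (n:ℤ) := by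
        apply Int.ModEq.symm
        apply Int.modEq_iff_dvd.mpr
        have h3 : (n:ℤ) ∣ (x - 1 - r) - (x - 1 - r) % (n:ℤ) := Int.dvd_self_sub_of_emod_eq rfl
        have he : x - 1 - (x - 1 - r) % (n:ℤ) - r = (x - 1 - r) - (x - 1 - r) % (n:ℤ) := by ring
        rw [he]; exact h3
      have h5 : r % (n:ℤ) = r := Int.emod_eq_of_lt hr.1.1 hr.1.2
      refine ⟨x - 1 - ((x - 1 - r) % (n:ℤ)), ?_, ?_⟩
      · simp only [winF, Finset.coe_filter, Set.mem_setOf_eq, Finset.mem_Ico]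
        rw [h4, h5]
        exact ⟨⟨by omega, by omega⟩, hr.2⟩
      · show (x - 1 - ((x - 1 - r) % (n:ℤ))) % (n:ℤ) = r
        rw [h4, h5]
  rw [key, Finset.card_sdiff_of_subset hF]
  simp

lemma winF_nonempty (hn : 0 < n) (hF : F ⊆ Finset.Ico (0:ℤ) (n:ℤ)) (hFc : F.card < n) (x : ℤ) :
    (winF n F x).Nonempty := by
  rw [← Finset.card_pos, winF_card hn hF]; omega

lemma prev_mem (hn : 0 < n) (hF : F ⊆ Finset.Ico (0:ℤ) (n:ℤ)) (hFc : F.card < n) (x : ℤ) :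
    prev n F x ∈ winF n F x := by
  rw [prev, dif_pos (winF_nonempty hn hF hFc x)]
  exact Finset.max'_mem _ _

lemma prev_lt (hn : 0 < n) (hF : F ⊆ Finset.Ico (0:ℤ) (n:ℤ)) (hFc : F.card < n) (x : ℤ) :
    prev n F x < x := by
  have := prev_mem hn hF hFc x
  simp only [winF, Finset.mem_filter, Finset.mem_Ico] at this
  exact this.1.2

lemma prev_ge (hn : 0 < n) (hF : F ⊆ Finset.Ico (0:ℤ) (n:ℤ)) (hFc : F.card < n) (x : ℤ) :
    x - n ≤ prev n F x := by
  have := prev_mem hn hF hFc x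
  simp only [winF, Finset.mem_filter, Finset.mem_Ico] at this
  exact this.1.1

lemma prev_allowed (hn : 0 < n) (hF : F ⊆ Finset.Ico (0:ℤ) (n:ℤ)) (hFc : F.card < n) (x : ℤ) :
    (prev n F x) % (n:ℤ) ∉ F := by
  have := prev_mem hn hF hFc x
  simp only [winF, Finset.mem_filter, Finset.mem_Ico] at this
  exact this.2

lemma prev_max (hn : 0 < n) (hF : F ⊆ Finset.Ico (0:ℤ) (n:ℤ)) (hFc : F.card < n)
    (x t : ℤ) (h1 : prev n F x < t) (h2 : t < x) (h3 : t % (n:ℤ) ∉ F) : False := by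
  have hge := prev_ge hn hF hFc x
  have hmem : t ∈ winF n F x := by
    simp only [winF, Finset.mem_filter, Finset.mem_Ico]
    exact ⟨⟨by omega, h2⟩, h3⟩
  rw [prev, dif_pos (winF_nonempty hn hF hFc x)] at h1
  exact absurd (Finset.le_max' _ t hmem) (by omega)

end Hyp

namespace Hyp
variable {n : ℕ} {F : Finset ℤ}

lemma card_filter_Ioo_split (a b c : ℤ) (hab : a < b) (hbc : b < c)
    (p : ℤ → Prop) [DecidablePred p] (hb : p b) :
    ((Finset.Ioo a c).filter p).card
      = ((Finset.Ioo a b).filter p).card + 1 + ((Finset.Ioo b c).filter p).card := by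
  have hsplit : (Finset.Ioo a c).filter p
      = ((Finset.Ioo a b).filter p) ∪ insert b ((Finset.Ioo b c).filter p) := by
    ext t
    simp only [Finset.mem_filter, Finset.mem_Ioo, Finset.mem_union, Finset.mem_insert]
    constructor
    · rintro ⟨⟨h1, h2⟩, hp⟩
      rcases lt_trichotomy t b with h | h | h
      · exact Or.inl ⟨⟨h1, h⟩, hp⟩
      · exact Or.inr (Or.inl h)
      · exact Or.inr (Or.inr ⟨⟨h, h2⟩, hp⟩)
    · rintro (⟨⟨h1, h2⟩, hp⟩ | h | ⟨⟨h1, h2⟩, hp⟩)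
      · exact ⟨⟨h1, by omega⟩, hp⟩
      · subst h; exact ⟨⟨hab, hbc⟩, hb⟩
      · exact ⟨⟨by omega, h2⟩, hp⟩
  have hnot : b ∉ (Finset.Ioo b c).filter p := by
    simp [Finset.mem_filter]
  have hdisj : Disjoint ((Finset.Ioo a b).filter p) (insert b ((Finset.Ioo b c).filter p)) := by
    rw [Finset.disjoint_left]
    intro t ht
    simp only [Finset.mem_filter, Finset.mem_Ioo] at ht
    simp only [Finset.mem_insert, Finset.mem_filter, Finset.mem_Ioo]
    push_neg
    exact ⟨by omega, fun h => absurd h.1 (by omega)⟩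
  rw [hsplit, Finset.card_union_of_disjoint hdisj, Finset.card_insert_of_notMem hnot]
  ring

lemma iter_lt (hn : 0 < n) (hF : F ⊆ Finset.Ico (0:ℤ) (n:ℤ)) (hFc : F.card < n)
    (x : ℤ) (m : ℕ) : (prev n F)^[m + 1] x < x := by
  induction m with
  | zero => simpa using prev_lt hn hF hFc x
  | succ m ih =>
    rw [Function.iterate_succ_apply']
    exact lt_trans (prev_lt hn hF hFc _) ih

lemma iter_allowed (hn : 0 < n) (hF : F ⊆ Finset.Ico (0:ℤ) (n:ℤ)) (hFc : F.card < n)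
    (x : ℤ) (m : ℕ) : ((prev n F)^[m + 1] x) % (n:ℤ) ∉ F := by
  rw [Function.iterate_succ_apply']
  exact prev_allowed hn hF hFc _

lemma iter_count (hn : 0 < n) (hF : F ⊆ Finset.Ico (0:ℤ) (n:ℤ)) (hFc : F.card < n)
    (x : ℤ) (m : ℕ) :
    (((Finset.Ioo ((prev n F)^[m + 1] x) x)).filter (fun t => t % (n:ℤ) ∉ F)).card = m := by
  induction m with
  | zero =>
    rw [Finset.card_eq_zero, Finset.filter_eq_empty_iff]
    intro t ht
    simp only [Finset.mem_Ioo, Function.iterate_one] at ht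
    intro hall
    exact prev_max hn hF hFc x t (by simpa using ht.1) ht.2 hall
  | succ m ih =>
    rw [Function.iterate_succ_apply']
    set y := (prev n F)^[m + 1] x with hy
    have h1 : prev n F y < y := prev_lt hn hF hFc y
    have h2 : y < x := iter_lt hn hF hFc x m
    have h3 : y % (n:ℤ) ∉ F := iter_allowed hn hF hFc x m
    rw [card_filter_Ioo_split (prev n F y) y x h1 h2 _ h3, ih]
    have h0 : ((Finset.Ioo (prev n F y) y).filter (fun t => t % (n:ℤ) ∉ F)).card = 0 := by
      rw [Finset.card_eq_zero, Finset.filter_eq_empty_iff]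
      intro t ht hall
      simp only [Finset.mem_Ioo] at ht
      exact prev_max hn hF hFc y t ht.1 ht.2 hall
    omega

lemma iter_ge (hn : 0 < n) (hF : F ⊆ Finset.Ico (0:ℤ) (n:ℤ)) (hFc : F.card < n)
    (x : ℤ) (m : ℕ) (hm : m + 1 ≤ n - F.card) : x - n ≤ (prev n F)^[m + 1] x := by
  by_contra hlt
  push_neg at hlt
  have hsub : winF n F x ⊆ (Finset.Ioo ((prev n F)^[m+1] x) x).filter (fun t => t % (n:ℤ) ∉ F) := by
    apply Finset.filter_subset_filter
    intro t ht
    simp only [Finset.mem_Ico] at ht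
    simp only [Finset.mem_Ioo]
    omega
  have := Finset.card_le_card hsub
  rw [winF_card hn hF, iter_count hn hF hFc] at this
  omega

lemma iter_gt (hn : 0 < n) (hF : F ⊆ Finset.Ico (0:ℤ) (n:ℤ)) (hFc : F.card < n)
    (x : ℤ) (m : ℕ) (hm : m + 1 ≤ n - F.card) (hx : x % (n:ℤ) ∈ F) :
    x - n < (prev n F)^[m + 1] x := by
  have h1 := iter_ge hn hF hFc x m hm
  rcases h1.lt_or_eq with h | h
  · exact h
  · exfalso
    have h2 := iter_allowed hn hF hFc x m
    rw [← h] at h2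
    have hxmod : (x - (n:ℤ)) % (n:ℤ) = x % (n:ℤ) := by
      simp [Int.sub_emod, Int.emod_self, Int.emod_emod_of_dvd]
    rw [hxmod] at h2
    exact h2 hx
end Hyp

namespace Hyp

variable {n : ℕ} {s : ℤ → ℤ}

lemma periodic (hs : ∀ i : ℤ, s (i + n) = s i + n) (i m : ℤ) :
    s (i + m * n) = s i + m * n := by
  induction m using Int.induction_on with
  | zero => simp
  | succ m ih =>
    have : i + (m + 1) * (n:ℤ) = (i + m * n) + n := by ring
    rw [this, hs, ih]; ring
  | pred m ih =>
    have h1 : s ((i + (-m - 1) * (n:ℤ)) + (n:ℤ)) = s (i + (-m - 1) * (n:ℤ)) + n := hs _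
    have h2 : (i + (-m - 1) * (n:ℤ)) + (n:ℤ) = i + (-m : ℤ) * n := by ring
    rw [h2] at h1
    rw [ih] at h1
    omega

lemma window_lt (hn : 2 ≤ n) (hdom : IsDominant n s)
    (i j : ℤ) (hi : 1 ≤ i) (hij : i < j) (hj : j ≤ n) : s i < s j := by
  have H : ∀ k : ℕ, ∀ j : ℤ, j = i + 1 + k → j ≤ n → s i < s j := by
    intro k
    induction k with
    | zero =>
      intro j hj hjn
      have hje : j = i + 1 := by push_cast at hj; omega
      rw [hje]; exact hdom i hi (by omega)
    | succ k ih =>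
      intro j hj hjn
      have hje : j = i + 1 + k + 1 := by push_cast at hj; omega
      have h1 : s i < s (i + 1 + k) := ih (i + 1 + k) rfl (by omega)
      have h2 : s (i + 1 + k) < s (i + 1 + k + 1) := hdom (i + 1 + k) (by omega) (by omega)
      rw [hje]; omega
  exact H (j - i - 1).toNat j (by omega) hj

lemma window_le (hn : 2 ≤ n) (hdom : IsDominant n s)
    (i j : ℤ) (hi : 1 ≤ i) (hij : i ≤ j) (hj : j ≤ n) : s i ≤ s j := by
  rcases hij.lt_or_eq with h | h
  · exact (window_lt hn hdom i j hi h hj).le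
  · rw [h]

/-- decomposition of an arbitrary index into window index plus multiple of n -/
lemma rep (hn : 2 ≤ n) (hp : ∀ i : ℤ, s (i + n) = s i + n) (j : ℤ) :
    ∃ k m : ℤ, 1 ≤ k ∧ k ≤ n ∧ j = k + m * n ∧ s j = s k + m * n := by
  have hn0 : (0:ℤ) < n := by exact_mod_cast Nat.lt_of_lt_of_le Nat.zero_lt_two hn
  have hmc : (n:ℤ) * ((j - 1) / n) = ((j - 1) / n) * (n:ℤ) := mul_comm _ _
  have hed := Int.emod_add_mul_ediv (j - 1) (n:ℤ)
  refine ⟨(j - 1) % n + 1, (j - 1) / n, ?_, ?_, ?_, ?_⟩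
  · have := Int.emod_nonneg (j - 1) (show (n:ℤ) ≠ 0 by omega); omega
  · have := Int.emod_lt_of_pos (j - 1) hn0; omega
  · omega
  · have h2 : s (((j - 1) % n + 1) + ((j - 1) / n) * n)
        = s ((j - 1) % n + 1) + ((j - 1) / n) * n := periodic hp _ _
    have h1 : j = ((j - 1) % n + 1) + ((j - 1) / n) * n := by omega
    conv_lhs => rw [h1]
    exact h2

lemma residues_distinct (hn : 2 ≤ n) (hs : IsAffPerm n s)
    (i j : ℤ) (hi1 : 1 ≤ i) (hi2 : i ≤ n) (hj1 : 1 ≤ j) (hj2 : j ≤ n)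
    (hdvd : (n:ℤ) ∣ s i - s j) : i = j := by
  obtain ⟨c, hc⟩ := hdvd
  have hmc : (n:ℤ) * c = c * (n:ℤ) := mul_comm _ _
  have h1 : s i = s (j + c * n) := by rw [periodic hs.2.1 j c]; omega
  have h2 : i = j + c * n := hs.1.1 h1
  have hn0 : (0:ℤ) < n := by exact_mod_cast Nat.lt_of_lt_of_le Nat.zero_lt_two hn
  have hc0 : c = 0 := by
    rcases lt_trichotomy c 0 with h | h | h
    · nlinarith
    · exact h
    · nlinarith
  simp [hc0] at h2; exact h2

lemma complete_residues (hn : 2 ≤ n) (hs : IsAffPerm n s) (t : ℤ) :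
    ∃ k : ℤ, 1 ≤ k ∧ k ≤ n ∧ (n:ℤ) ∣ t - s k := by
  obtain ⟨j, hj⟩ := hs.1.2 t
  obtain ⟨k, m, hk1, hk2, _, hsj⟩ := rep hn hs.2.1 j
  have hmc : (n:ℤ) * m = m * (n:ℤ) := mul_comm _ _
  exact ⟨k, hk1, hk2, ⟨m, by omega⟩⟩

lemma lower_bound (hn : 2 ≤ n) (hs : IsAffPerm n s) (hdom : IsDominant n s) (j : ℤ) :
    s 1 + (j - n) ≤ s j := by
  obtain ⟨k, m, hk1, hk2, hjd, hsj⟩ := rep hn hs.2.1 j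
  have h1 : s 1 ≤ s k := window_le hn hdom 1 k le_rfl hk1 hk2
  omega

end Hyp

namespace Hyp

variable {n : ℕ} {s : ℤ → ℤ}

lemma dvd_zero_of_small {n : ℕ} {a : ℤ} (h : (n:ℤ) ∣ a) (h1 : -(n:ℤ) < a) (h2 : a < n) :
    a = 0 := by
  obtain ⟨c, hc⟩ := h
  have hn0 : (0:ℤ) < n := by
    rcases Nat.eq_zero_or_pos n with h | h
    · subst h; simp at hc; omega
    · exact_mod_cast h
  have hc0 : c = 0 := by
    rcases lt_trichotomy c 0 with h | h | h
    · nlinarith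
    · exact h
    · nlinarith
  simp [hc0] at hc; omega

/-- the set of "allowed" integers strictly between `s i` and `s (i+1)`. -/
noncomputable def gamF (n : ℕ) (s : ℤ → ℤ) (i : ℤ) : Finset ℤ :=
  (Finset.Ioo (s i) (s (i+1))).filter
    (fun t => ∀ l ∈ Finset.Icc (i+1) (n:ℤ), ¬ (n:ℤ) ∣ (t - s l))

/-- the statistic vector. -/
noncomputable def G (n : ℕ) (s : ℤ → ℤ) (k : Fin (n-1)) : ℕ := (gamF n s ((k:ℕ)+1)).card

section Facts
variable (hn : 2 ≤ n) (hs : IsAffPerm n s) (hdom : IsDominant n s)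
  (hcube : ∀ i : ℤ, 1 ≤ i → i < (n : ℤ) → s (i + 1) < s i + n)

/-- Lemma A : the range bound. -/
lemma gamF_card_le (hn : 2 ≤ n) (hs : IsAffPerm n s) (hdom : IsDominant n s)
    (hcube : ∀ i : ℤ, 1 ≤ i → i < (n : ℤ) → s (i + 1) < s i + n)
    (i : ℤ) (hi1 : 1 ≤ i) (hi2 : i ≤ (n:ℤ) - 1) :
    (gamF n s i).card ≤ (i - 1).toNat := by
  choose f hf1 hf2 hf3 using fun t => complete_residues hn hs t
  have hwidth : s (i+1) < s i + n := hcube i hi1 (by omega)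
  have hmap : ∀ t ∈ gamF n s i, f t ∈ Finset.Icc (1:ℤ) (i - 1) := by
    intro t ht
    simp only [gamF, Finset.mem_filter, Finset.mem_Ioo] at ht
    have hle : f t ≤ i := by
      by_contra h
      push_neg at h
      exact ht.2 (f t) (Finset.mem_Icc.mpr ⟨by omega, hf2 t⟩) (hf3 t)
    have hne : f t ≠ i := by
      intro h
      have hdvd : (n:ℤ) ∣ t - s i := h ▸ hf3 t
      have := dvd_zero_of_small hdvd (by omega) (by omega)
      omega
    exact Finset.mem_Icc.mpr ⟨hf1 t, by omega⟩
  have hinj : Set.InjOn f ↑(gamF n s i) := by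
    intro a ha b hb hab
    simp only [gamF, Finset.coe_filter, Set.mem_setOf_eq, Finset.mem_Ioo] at ha hb
    have h1 : (n:ℤ) ∣ a - s (f a) := hf3 a
    have h2 : (n:ℤ) ∣ b - s (f b) := hf3 b
    rw [hab] at h1
    have h3 : (n:ℤ) ∣ a - b := by
      have := dvd_sub h1 h2
      simpa using this
    have := dvd_zero_of_small h3 (by omega) (by omega)
    omega
  have := Finset.card_le_card_of_injOn f hmap hinj
  rwa [Int.card_Icc, show (i - 1 + 1 - 1 : ℤ) = i - 1 by ring] at this

/-- the interval index of a point `t` -/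
noncomputable def idx (n : ℕ) (s : ℤ → ℤ) (t : ℤ) : ℤ :=
  if h : (((Finset.Icc (1:ℤ) (n:ℤ))).filter (fun l => s l < t)).Nonempty
  then (((Finset.Icc (1:ℤ) (n:ℤ))).filter (fun l => s l < t)).max' h else 0

lemma idx_spec (hn : 2 ≤ n) (hdom : IsDominant n s)
    (t : ℤ) (h1 : s 1 < t) (h2 : t < s n) (h3 : ∀ l : ℤ, 1 ≤ l → l ≤ n → t ≠ s l) :
    1 ≤ idx n s t ∧ idx n s t ≤ (n:ℤ) - 1 ∧ s (idx n s t) < t ∧ t < s (idx n s t + 1) := by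
  set A := ((Finset.Icc (1:ℤ) (n:ℤ))).filter (fun l => s l < t) with hA
  have h1A : (1:ℤ) ∈ A := by
    simp only [hA, Finset.mem_filter, Finset.mem_Icc]
    exact ⟨⟨le_rfl, by omega⟩, h1⟩
  have hne : A.Nonempty := ⟨1, h1A⟩
  have hidx : idx n s t = A.max' hne := by rw [idx, dif_pos hne]
  have hmem : idx n s t ∈ A := by rw [hidx]; exact Finset.max'_mem A hne
  have hmax : ∀ b ∈ A, b ≤ idx n s t := by
    intro b hb; rw [hidx]; exact Finset.le_max' A b hb
  simp only [hA, Finset.mem_filter, Finset.mem_Icc] at hmem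
  have hub : idx n s t ≤ (n:ℤ) - 1 := by
    rcases hmem.1.2.lt_or_eq with h | h
    · omega
    · exfalso; rw [h] at hmem; exact absurd hmem.2 (by omega)
  have hlt : t < s (idx n s t + 1) := by
    rcases lt_trichotomy t (s (idx n s t + 1)) with h | h | h
    · exact h
    · exact absurd h (h3 _ (by omega) (by omega))
    · exfalso
      have hmem2 : idx n s t + 1 ∈ A := by
        simp only [hA, Finset.mem_filter, Finset.mem_Icc]
        exact ⟨⟨by omega, by omega⟩, h⟩
      have := hmax _ hmem2
      omega
  exact ⟨hmem.1.1, hub, hmem.2, hlt⟩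

lemma idx_unique (hn : 2 ≤ n) (hdom : IsDominant n s)
    (t i' : ℤ) (hi1 : 1 ≤ i') (hi2 : i' ≤ (n:ℤ) - 1) (hl : s i' < t) (hr : t < s (i' + 1))
    (j' : ℤ) (hj1 : 1 ≤ j') (hj2 : j' ≤ (n:ℤ) - 1) (hl' : s j' < t) (hr' : t < s (j' + 1)) :
    i' = j' := by
  by_contra h
  rcases lt_or_gt_of_ne h with hlt | hlt
  · have : s (i' + 1) ≤ s j' := window_le hn hdom (i'+1) j' (by omega) (by omega) (by omega)
    omega
  · have : s (j' + 1) ≤ s i' := window_le hn hdom (j'+1) i' (by omega) (by omega) (by omega)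
    omega

end Facts
end Hyp

namespace Hyp
variable {n : ℕ} {s : ℤ → ℤ}

lemma mem_gamF {i t : ℤ} : t ∈ gamF n s i ↔
    s i < t ∧ t < s (i+1) ∧ ∀ l : ℤ, i+1 ≤ l → l ≤ n → ¬ (n:ℤ) ∣ (t - s l) := by
  simp only [gamF, Finset.mem_filter, Finset.mem_Ioo, Finset.mem_Icc, and_assoc]
  constructor
  · rintro ⟨h1, h2, h3⟩
    exact ⟨h1, h2, fun l hl1 hl2 => h3 l ⟨hl1, hl2⟩⟩
  · rintro ⟨h1, h2, h3⟩
    exact ⟨h1, h2, fun l hl => h3 l hl.1 hl.2⟩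

lemma inv_pair_facts (hn : 2 ≤ n) (hs : IsAffPerm n s) (hdom : IsDominant n s)
    (p : ℤ × ℤ) (h1 : 1 ≤ p.1) (h2 : p.1 ≤ (n:ℤ)) (h3 : p.1 < p.2) (h4 : s p.2 < s p.1) :
    (n:ℤ) < p.2 ∧ s 1 < s p.2 ∧ s p.2 < s n ∧ (∀ l : ℤ, 1 ≤ l → l ≤ n → s p.2 ≠ s l) ∧
      (∃ k : ℤ, 1 ≤ k ∧ k ≤ n ∧ (n:ℤ) ∣ s p.2 - s k ∧ s k + n ≤ s p.2) := by
  have hn0 : (0:ℤ) < n := by omega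
  have hp2 : (n:ℤ) < p.2 := by
    by_contra h
    push_neg at h
    exact absurd (window_lt hn hdom p.1 p.2 h1 h3 h) (by omega)
  obtain ⟨k, m, hk1, hk2, hjd, hsj⟩ := rep hn hs.2.1 p.2
  have hm1 : 1 ≤ m := by nlinarith
  have hsk : s 1 ≤ s k := window_le hn hdom 1 k le_rfl hk1 hk2
  have hf2 : s 1 < s p.2 := by nlinarith
  have hf3 : s p.2 < s n := lt_of_lt_of_le h4 (window_le hn hdom p.1 n h1 h2 le_rfl)
  have hmc : (n:ℤ) * m = m * (n:ℤ) := mul_comm _ _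
  refine ⟨hp2, hf2, hf3, ?_, ⟨k, hk1, hk2, ⟨m, by omega⟩, by nlinarith⟩⟩
  intro l hl1 hl2 heq
  have := hs.1.1 heq
  omega

lemma invNum_eq (hn : 2 ≤ n) (hs : IsAffPerm n s) (hdom : IsDominant n s)
    (hcube : ∀ i : ℤ, 1 ≤ i → i < (n : ℤ) → s (i + 1) < s i + n) :
    invNum n s = ∑ k : Fin (n-1), (n - ((k:ℕ)+1)) * G n s k := by
  classical
  have hn0 : (0:ℤ) < n := by omega
  set N : ℤ := s n - s 1 + n with hN
  set invF : Finset (ℤ×ℤ) := ((Finset.Icc (1:ℤ) (n:ℤ)) ×ˢ (Finset.Icc (2:ℤ) N)).filter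
      (fun p => p.1 < p.2 ∧ s p.2 < s p.1) with hinvF
  have hmemF : ∀ p : ℤ × ℤ, p ∈ invF ↔ (1 ≤ p.1 ∧ p.1 ≤ (n:ℤ) ∧ p.1 < p.2 ∧ s p.2 < s p.1) := by
    intro p
    simp only [hinvF, Finset.mem_filter, Finset.mem_product, Finset.mem_Icc]
    constructor
    · rintro ⟨⟨⟨ha, hb⟩, _⟩, hc, hd⟩
      exact ⟨ha, hb, hc, hd⟩
    · rintro ⟨ha, hb, hc, hd⟩
      have hfacts := inv_pair_facts hn hs hdom p ha hb hc hd
      have hlb := lower_bound hn hs hdom p.2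
      exact ⟨⟨⟨ha, hb⟩, ⟨by omega, by omega⟩⟩, hc, hd⟩
  have hset : {p : ℤ×ℤ | 1 ≤ p.1 ∧ p.1 ≤ (n:ℤ) ∧ p.1 < p.2 ∧ s p.2 < s p.1} = ↑invF := by
    ext p
    simp only [Set.mem_setOf_eq, Finset.mem_coe, hmemF]
  rw [invNum, hset, Set.ncard_coe_finset]
  -- fiberwise count
  have hfib : ∀ p ∈ invF, (idx n s (s p.2) - 1).toNat ∈ Finset.range (n-1) := by
    intro p hp
    rw [hmemF] at hp
    obtain ⟨hf1, hf2, hf3, hf4, _⟩ := inv_pair_facts hn hs hdom p hp.1 hp.2.1 hp.2.2.1 hp.2.2.2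
    obtain ⟨hi1, hi2, _, _⟩ := idx_spec hn hdom (s p.2) hf2 hf3 hf4
    simp only [Finset.mem_range]
    omega
  rw [Finset.card_eq_sum_card_fiberwise hfib]
  have hfin : ∑ k : Fin (n-1), (n - ((k:ℕ)+1)) * G n s k
      = ∑ k ∈ Finset.range (n-1), (n - (k+1)) * (gamF n s ((k:ℤ)+1)).card :=
    Fin.sum_univ_eq_sum_range (fun k => (n - (k+1)) * (gamF n s ((k:ℤ)+1)).card) (n-1)
  rw [hfin]
  · apply Finset.sum_congr rfl
    intro k hk
    rw [Finset.mem_range] at hk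
    -- fiber card = (n - (k+1)) * gamF card
    have hbij : (invF.filter (fun p => (idx n s (s p.2) - 1).toNat = k)).card
        = ((Finset.Ioc ((k:ℤ)+1) (n:ℤ)) ×ˢ gamF n s ((k:ℤ)+1)).card := by
      apply Finset.card_nbij (i := fun p => (p.1, s p.2))
      · intro p hp
        simp only [Finset.mem_coe, Finset.mem_filter] at hp
        obtain ⟨hpF, hpk⟩ := hp
        rw [hmemF] at hpF
        obtain ⟨hf1, hf2, hf3, hf4, kk, hkk1, hkk2, hkdvd, hkle⟩ :=
          inv_pair_facts hn hs hdom p hpF.1 hpF.2.1 hpF.2.2.1 hpF.2.2.2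
        obtain ⟨hi1, hi2, hi3, hi4⟩ := idx_spec hn hdom (s p.2) hf2 hf3 hf4
        have hidxk : idx n s (s p.2) = (k:ℤ) + 1 := by omega
        rw [Finset.mem_coe, Finset.mem_product, Finset.mem_Ioc]
        constructor
        · -- idx < p.1 ≤ n
          constructor
          · by_contra h
            push_neg at h
            have : s p.1 ≤ s ((k:ℤ)+1) := window_le hn hdom p.1 ((k:ℤ)+1) hpF.1 h (by omega)
            rw [← hidxk] at this
            omega
          · exact hpF.2.1
        · rw [mem_gamF]
          refine ⟨hidxk ▸ hi3, by rw [show (k:ℤ)+1+1 = idx n s (s p.2) + 1 by omega]; exact hi4, ?_⟩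
          intro l hl1 hl2 hdvd
          have hdvd2 : (n:ℤ) ∣ s l - s kk := by
            have := dvd_sub hdvd hkdvd
            have heq : s p.2 - s l - (s p.2 - s kk) = -(s l - s kk) := by ring
            rw [heq] at this
            exact (dvd_neg.mp this)
          have hlk : l = kk := residues_distinct hn hs l kk (by omega) hl2 hkk1 hkk2 hdvd2
          have hsl : s ((k:ℤ)+1+1) ≤ s l := window_le hn hdom ((k:ℤ)+1+1) l (by omega) (by omega) hl2
          rw [show (k:ℤ)+1+1 = idx n s (s p.2) + 1 by omega] at hsl
          rw [hlk] at hsl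
          omega
      · -- injective
        intro p hp q hq heq
        simp only [Finset.coe_filter, Set.mem_setOf_eq] at hp hq
        simp only [Prod.mk.injEq] at heq
        have h2 : p.2 = q.2 := hs.1.1 heq.2
        exact Prod.ext heq.1 h2
      · -- surjective
        rintro ⟨i, t⟩ hit
        simp only [Finset.coe_product, Set.mem_prod, Finset.mem_coe, Finset.mem_Ioc] at hit
        obtain ⟨⟨hik, hin⟩, hgam⟩ := hit
        rw [mem_gamF] at hgam
        obtain ⟨hg1, hg2, hg3⟩ := hgam
        set jt := Function.surjInv hs.1.2 t with hjt
        have hsjt : s jt = t := Function.surjInv_eq hs.1.2 t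
        -- facts about t
        have ht1 : s 1 < t := lt_of_le_of_lt (window_le hn hdom 1 ((k:ℤ)+1) le_rfl (by omega) (by omega)) hg1
        have ht2 : t < s n := lt_of_lt_of_le hg2 (window_le hn hdom ((k:ℤ)+1+1) n (by omega) (by omega) le_rfl)
        have ht3 : ∀ l : ℤ, 1 ≤ l → l ≤ n → t ≠ s l := by
          intro l hl1 hl2 heq
          rcases le_or_gt l ((k:ℤ)+1) with h | h
          · have : s l ≤ s ((k:ℤ)+1) := window_le hn hdom l ((k:ℤ)+1) hl1 h (by omega)
            omega
          · exact hg3 l (by omega) hl2 (by rw [heq]; simp)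
        -- jt > n
        obtain ⟨k1, m1, hk11, hk12, hjd, hsj⟩ := rep hn hs.2.1 jt
        have hmc1 : (n:ℤ) * m1 = m1 * (n:ℤ) := mul_comm _ _
        have hdvd1 : (n:ℤ) ∣ t - s k1 := ⟨m1, by omega⟩
        have hk1le : k1 ≤ (k:ℤ)+1 := by
          by_contra h
          push_neg at h
          exact hg3 k1 (by omega) hk12 hdvd1
        have hsk1 : s k1 ≤ s ((k:ℤ)+1) := window_le hn hdom k1 ((k:ℤ)+1) hk11 hk1le (by omega)
        have hm1 : 1 ≤ m1 := by nlinarith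
        have hjtn : (n:ℤ) < jt := by nlinarith
        -- membership in fiber
        have hpmem : (i, jt) ∈ invF := by
          rw [hmemF]
          refine ⟨by omega, hin, by omega, ?_⟩
          have : s ((k:ℤ)+1+1) ≤ s i := window_le hn hdom ((k:ℤ)+1+1) i (by omega) (by omega) hin
          simp only []
          omega
        have hfibeq : (idx n s (s jt) - 1).toNat = k := by
          rw [hsjt]
          obtain ⟨hi1, hi2, hi3, hi4⟩ := idx_spec hn hdom t ht1 ht2 ht3
          have := idx_unique hn hdom t (idx n s t) hi1 hi2 hi3 hi4 ((k:ℤ)+1) (by omega) (by omega) hg1 hg2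
          omega
        refine ⟨(i, jt), ?_, ?_⟩
        · simp only [Finset.coe_filter, Set.mem_setOf_eq]
          exact ⟨hpmem, hfibeq⟩
        · simp [hsjt]
    rw [hbij, Finset.card_product, Int.card_Ioc]
    have hcast : ((n:ℤ) - ((k:ℤ)+1)).toNat = n - (k+1) := by omega
    rw [hcast]

end Hyp

namespace Hyp
variable {n : ℕ} {s s' : ℤ → ℤ}

lemma count_eq_inj (p : ℤ → Prop) [DecidablePred p] (x a b : ℤ)
    (ha : a < x) (hb : b < x) (hpa : p a) (hpb : p b)
    (h : ((Finset.Ioo a x).filter p).card = ((Finset.Ioo b x).filter p).card) : a = b := by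
  by_contra hne
  wlog hab : a < b generalizing a b
  · exact this b a hb ha hpb hpa h.symm (Ne.symm hne) (by omega)
  have hsub : insert b ((Finset.Ioo b x).filter p) ⊆ (Finset.Ioo a x).filter p := by
    intro t ht
    rcases Finset.mem_insert.mp ht with h1 | h1
    · subst h1
      exact Finset.mem_filter.mpr ⟨Finset.mem_Ioo.mpr ⟨hab, hb⟩, hpb⟩
    · simp only [Finset.mem_filter, Finset.mem_Ioo] at h1 ⊢
      exact ⟨⟨by omega, h1.1.2⟩, h1.2⟩
  have hcard := Finset.card_le_card hsub
  rw [Finset.card_insert_of_notMem (by simp [Finset.mem_filter])] at hcard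
  omega

lemma eq_of_G_eq (hn : 2 ≤ n)
    (hs : IsAffPerm n s) (hdom : IsDominant n s)
    (hcube : ∀ i : ℤ, 1 ≤ i → i < (n : ℤ) → s (i + 1) < s i + n)
    (hs' : IsAffPerm n s') (hdom' : IsDominant n s')
    (hcube' : ∀ i : ℤ, 1 ≤ i → i < (n : ℤ) → s' (i + 1) < s' i + n)
    (hG : G n s = G n s') : s = s' := by
  classical
  set δ := s n - s' n with hδ
  -- gamF cards agree
  have hgam : ∀ i : ℤ, 1 ≤ i → i ≤ (n:ℤ) - 1 → (gamF n s i).card = (gamF n s' i).card := by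
    intro i hi1 hi2
    have hk : (i - 1).toNat < n - 1 := by omega
    have := congrFun hG ⟨(i - 1).toNat, hk⟩
    simp only [G] at this
    have hcast : (((i-1).toNat : ℕ) : ℤ) + 1 = i := by omega
    rwa [hcast] at this
  -- downward induction on the window
  have key : ∀ j : ℕ, j ≤ n - 1 → s ((n:ℤ) - j) = s' ((n:ℤ) - j) + δ := by
    intro j
    induction j using Nat.strong_induction_on with
    | _ j ih =>
      intro hj
      rcases Nat.eq_zero_or_pos j with h0 | h0
      · subst h0; simp [hδ]
      -- i := n - j ∈ [1, n-1]
      set i : ℤ := (n:ℤ) - j with hi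
      have hi1 : 1 ≤ i := by omega
      have hi2 : i ≤ (n:ℤ) - 1 := by omega
      have htail : ∀ l : ℤ, i + 1 ≤ l → l ≤ n → s l = s' l + δ := by
        intro l hl1 hl2
        have hjl : ((n:ℤ) - l).toNat < j := by omega
        have := ih ((n:ℤ) - l).toNat hjl (by omega)
        have hc : (n:ℤ) - (((n:ℤ) - l).toNat : ℤ) = l := by omega
        rwa [hc] at this
      have hip1 : s (i+1) = s' (i+1) + δ := htail (i+1) le_rfl (by omega)
      -- shift bijection: gamF n s' i ≃ interval for s with left end s' i + δ
      set p : ℤ → Prop := fun t => ∀ l ∈ Finset.Icc (i+1) (n:ℤ), ¬ (n:ℤ) ∣ (t - s l) with hp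
      have hshift : (gamF n s' i).card = ((Finset.Ioo (s' i + δ) (s (i+1))).filter p).card := by
        apply Finset.card_nbij (i := fun t => t + δ)
        · intro t ht
          rw [Finset.mem_coe, mem_gamF] at ht
          simp only [Finset.mem_coe, Finset.mem_filter, Finset.mem_Ioo, hp]
          refine ⟨⟨by omega, by omega⟩, ?_⟩
          intro l hl
          rw [Finset.mem_Icc] at hl
          rw [htail l hl.1 hl.2]
          have : t + δ - (s' l + δ) = t - s' l := by ring
          rw [this]
          exact ht.2.2 l hl.1 hl.2
        · intro a _ b _ hab
          simpa using hab
        · intro t ht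
          simp only [Finset.coe_filter, Set.mem_setOf_eq, Finset.mem_Ioo, hp] at ht
          refine ⟨t - δ, ?_, by simp⟩
          rw [Finset.mem_coe, mem_gamF]
          refine ⟨by omega, by omega, ?_⟩
          intro l hl1 hl2
          have h2 := ht.2 l (Finset.mem_Icc.mpr ⟨hl1, hl2⟩)
          rw [htail l hl1 hl2] at h2
          have : t - (s' l + δ) = t - δ - s' l := by ring
          rwa [this] at h2
      have hgs : (gamF n s i).card = ((Finset.Ioo (s i) (s (i+1))).filter p).card := rfl
      -- apply count_eq_inj
      have hlt1 : s i < s (i+1) := hdom i hi1 (by omega)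
      have hlt2 : s' i + δ < s (i+1) := by
        have := hdom' i hi1 (by omega); omega
      have hpa : p (s i) := by
        intro l hl
        rw [Finset.mem_Icc] at hl
        intro hdvd
        have := residues_distinct hn hs i l hi1 (by omega) (by omega) hl.2 hdvd
        omega
      have hpb : p (s' i + δ) := by
        intro l hl
        rw [Finset.mem_Icc] at hl
        rw [htail l hl.1 hl.2]
        have heq : s' i + δ - (s' l + δ) = s' i - s' l := by ring
        rw [heq]
        intro hdvd
        have := residues_distinct hn hs' i l hi1 (by omega) (by omega) hl.2 hdvd
        omega
      have hcnt : ((Finset.Ioo (s i) (s (i+1))).filter p).card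
          = ((Finset.Ioo (s' i + δ) (s (i+1))).filter p).card := by
        rw [← hgs, ← hshift]
        exact hgam i hi1 hi2
      exact count_eq_inj p (s (i+1)) (s i) (s' i + δ) hlt1 hlt2 hpa hpb hcnt
  -- window equality up to δ
  have hwin : ∀ i : ℤ, 1 ≤ i → i ≤ (n:ℤ) → s i = s' i + δ := by
    intro i hi1 hi2
    have hj : ((n:ℤ) - i).toNat ≤ n - 1 := by omega
    have := key ((n:ℤ) - i).toNat hj
    have hc : (n:ℤ) - (((n:ℤ) - i).toNat : ℤ) = i := by omega
    rwa [hc] at this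
  -- δ = 0 from the sum conditions
  have hδ0 : δ = 0 := by
    have h1 := hs.2.2
    have h2 := hs'.2.2
    have h3 : ∑ i ∈ Finset.Icc (1:ℤ) (n:ℤ), s i
        = ∑ i ∈ Finset.Icc (1:ℤ) (n:ℤ), (s' i + δ) := by
      apply Finset.sum_congr rfl
      intro i hi
      rw [Finset.mem_Icc] at hi
      exact hwin i hi.1 hi.2
    rw [Finset.sum_add_distrib, Finset.sum_const, Int.card_Icc] at h3
    have hcard : ((n:ℤ) + 1 - 1).toNat = n := by omega
    rw [hcard] at h3
    have hsm : (n : ℕ) • δ = (n:ℤ) * δ := by simp [nsmul_eq_mul]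
    rw [hsm] at h3
    have hnd : (n:ℤ) * δ = 0 := by omega
    rcases mul_eq_zero.mp hnd with h | h
    · exfalso; omega
    · exact h
  funext j
  obtain ⟨k, m, hk1, hk2, hjd, hsj⟩ := rep hn hs.2.1 j
  have h2 : s' (k + m * (n:ℤ)) = s' k + m * n := periodic hs'.2.1 k m
  have h3 := hwin k hk1 hk2
  rw [hδ0, add_zero] at h3
  rw [hsj, h3, ← h2, ← hjd]

end Hyp

namespace Hyp
variable {n : ℕ}

/-- index helper for the recursion -/
def gOf (n : ℕ) (γ : Fin (n-1) → ℕ) (j : ℕ) : ℕ :=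
  if h : j < n - 1 then γ ⟨n - 2 - j, by omega⟩ else 0

/-- the recursive construction: value and forbidden residue set -/
noncomputable def stp (n : ℕ) (γ : Fin (n-1) → ℕ) : ℕ → ℤ × Finset ℤ
  | 0 => (0, {0})
  | (j+1) =>
      let q := stp n γ j
      let x := (prev n q.2)^[gOf n γ j + 1] q.1
      (x, insert (x % (n:ℤ)) q.2)

lemma stp_inv (hn : 2 ≤ n) (γ : Fin (n-1) → ℕ) (hγ : ∀ k, γ k ≤ (k:ℕ)) :
    ∀ j : ℕ, j ≤ n - 1 →
    ((stp n γ j).2 = (Finset.range (j+1)).image (fun m => (stp n γ m).1 % (n:ℤ))) ∧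
    (stp n γ j).2.card = j + 1 ∧ (stp n γ j).2 ⊆ Finset.Ico (0:ℤ) (n:ℤ) := by
  intro j
  induction j with
  | zero =>
    intro _
    refine ⟨?_, by simp [stp], ?_⟩
    · simp [stp]
    · intro t ht
      simp only [stp, Finset.mem_singleton] at ht
      subst ht
      simp only [Finset.mem_Ico]
      omega
  | succ j ih =>
    intro hj
    obtain ⟨h1, h2, h3⟩ := ih (by omega)
    have hFc : (stp n γ j).2.card < n := by omega
    have hx : (stp n γ (j+1)).1 = (prev n (stp n γ j).2)^[gOf n γ j + 1] (stp n γ j).1 := rfl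
    have hF : (stp n γ (j+1)).2 = insert ((stp n γ (j+1)).1 % (n:ℤ)) (stp n γ j).2 := rfl
    have hall : (stp n γ (j+1)).1 % (n:ℤ) ∉ (stp n γ j).2 := by
      rw [hx]; exact iter_allowed (by omega) h3 hFc _ _
    refine ⟨?_, ?_, ?_⟩
    · rw [hF, Finset.range_add_one, Finset.image_insert, ← h1]
    · rw [hF, Finset.card_insert_of_notMem hall, h2]
    · rw [hF]
      intro t ht
      rcases Finset.mem_insert.mp ht with h | h
      · subst h
        simp only [Finset.mem_Ico]
        constructor
        · exact Int.emod_nonneg _ (by omega)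
        · exact Int.emod_lt_of_pos _ (by omega)
      · exact h3 h

lemma stp_mem_self (hn : 2 ≤ n) (γ : Fin (n-1) → ℕ) (hγ : ∀ k, γ k ≤ (k:ℕ))
    (j : ℕ) (hj : j ≤ n - 1) : (stp n γ j).1 % (n:ℤ) ∈ (stp n γ j).2 := by
  obtain ⟨h1, _, _⟩ := stp_inv hn γ hγ j hj
  rw [h1]
  apply Finset.mem_image_of_mem
  simp

lemma stp_step (hn : 2 ≤ n) (γ : Fin (n-1) → ℕ) (hγ : ∀ k, γ k ≤ (k:ℕ))
    (j : ℕ) (hj : j + 1 ≤ n - 1) :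
    (stp n γ (j+1)).1 < (stp n γ j).1 ∧
    (stp n γ j).1 - n < (stp n γ (j+1)).1 ∧
    ((Finset.Ioo (stp n γ (j+1)).1 (stp n γ j).1).filter
        (fun t => t % (n:ℤ) ∉ (stp n γ j).2)).card = gOf n γ j := by
  obtain ⟨h1, h2, h3⟩ := stp_inv hn γ hγ j (by omega)
  have hFc : (stp n γ j).2.card < n := by omega
  have hx : (stp n γ (j+1)).1 = (prev n (stp n γ j).2)^[gOf n γ j + 1] (stp n γ j).1 := rfl
  have hg : gOf n γ j ≤ n - 2 - j := by
    rw [gOf, dif_pos (show j < n - 1 by omega)]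
    exact hγ _
  refine ⟨?_, ?_, ?_⟩
  · rw [hx]; exact iter_lt (by omega) h3 hFc _ _
  · rw [hx]
    exact iter_gt (by omega) h3 hFc _ _ (by omega) (stp_mem_self hn γ hγ j (by omega))
  · rw [hx]; exact iter_count (by omega) h3 hFc _ _

/-- decreasing over several steps -/
lemma stp_lt_of_lt (hn : 2 ≤ n) (γ : Fin (n-1) → ℕ) (hγ : ∀ k, γ k ≤ (k:ℕ))
    (j j' : ℕ) (hjj : j < j') (hj' : j' ≤ n - 1) : (stp n γ j').1 < (stp n γ j).1 := by
  induction j' with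
  | zero => omega
  | succ j' ih =>
    have h := (stp_step hn γ hγ j' (by omega)).1
    rcases Nat.lt_or_ge j j' with h2 | h2
    · exact lt_trans h (ih (by omega) (by omega))
    · have : j = j' := by omega
      subst this; exact h

end Hyp

namespace Hyp
variable {n : ℕ}

noncomputable def wOf (n : ℕ) (γ : Fin (n-1) → ℕ) (i : ℤ) : ℤ :=
  (stp n γ ((n:ℤ) - i).toNat).1

noncomputable def cOf (n : ℕ) (γ : Fin (n-1) → ℕ) : ℤ :=
  ((∑ i ∈ Finset.Icc (1:ℤ) (n:ℤ), i) - ∑ i ∈ Finset.Icc (1:ℤ) (n:ℤ), wOf n γ i) / n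

noncomputable def sOf (n : ℕ) (γ : Fin (n-1) → ℕ) : ℤ → ℤ :=
  fun i => wOf n γ ((i-1) % n + 1) + n * ((i-1) / n) + cOf n γ

variable {γ : Fin (n-1) → ℕ}

lemma sOf_window (hn : 2 ≤ n) (i : ℤ) (hi1 : 1 ≤ i) (hi2 : i ≤ n) :
    sOf n γ i = wOf n γ i + cOf n γ := by
  have h1 : (i-1) % n = i - 1 := Int.emod_eq_of_lt (by omega) (by omega)
  have h2 : (i-1) / n = 0 := Int.ediv_eq_zero_of_lt (by omega) (by omega)
  rw [sOf, h1, h2]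
  ring_nf

lemma sOf_periodic (hn : 2 ≤ n) (i : ℤ) : sOf n γ (i + n) = sOf n γ i + n := by
  have hn0 : (n:ℤ) ≠ 0 := by omega
  have e1 : i + (n:ℤ) - 1 = (i - 1) + 1 * n := by ring
  rw [sOf, sOf, e1, Int.add_mul_emod_self_right, Int.add_mul_ediv_right _ _ hn0]
  ring

lemma wOf_step (hn : 2 ≤ n) (hγ : ∀ k, γ k ≤ (k:ℕ)) (i : ℤ) (hi1 : 1 ≤ i) (hi2 : i ≤ (n:ℤ) - 1) :
    wOf n γ i < wOf n γ (i+1) ∧ wOf n γ (i+1) < wOf n γ i + n := by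
  set j : ℕ := ((n:ℤ) - i - 1).toNat with hj
  have h1 : ((n:ℤ) - i).toNat = j + 1 := by omega
  have h2 : ((n:ℤ) - (i+1)).toNat = j := by omega
  have hstep := stp_step hn γ hγ j (by omega)
  rw [wOf, wOf, h1, h2]
  exact ⟨hstep.1, by omega⟩

lemma sOf_dominant (hn : 2 ≤ n) (hγ : ∀ k, γ k ≤ (k:ℕ)) : IsDominant n (sOf n γ) := by
  intro i hi1 hi2
  rw [sOf_window hn i hi1 (by omega), sOf_window hn (i+1) (by omega) (by omega)]
  have := wOf_step hn hγ i hi1 (by omega)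
  omega

lemma sOf_cube (hn : 2 ≤ n) (hγ : ∀ k, γ k ≤ (k:ℕ)) :
    ∀ i : ℤ, 1 ≤ i → i < (n:ℤ) → sOf n γ (i+1) < sOf n γ i + n := by
  intro i hi1 hi2
  rw [sOf_window hn i hi1 (by omega), sOf_window hn (i+1) (by omega) (by omega)]
  have := wOf_step hn hγ i hi1 (by omega)
  omega

lemma stp_injOn (hn : 2 ≤ n) (hγ : ∀ k, γ k ≤ (k:ℕ)) :
    Set.InjOn (fun m => (stp n γ m).1 % (n:ℤ)) ↑(Finset.range n) := by
  obtain ⟨h1, h2, h3⟩ := stp_inv hn γ hγ (n-1) le_rfl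
  apply Finset.injOn_of_card_image_eq
  rw [show n - 1 + 1 = n by omega] at h1 h2
  rw [← h1, h2, Finset.card_range]

lemma stp_res_top (hn : 2 ≤ n) (hγ : ∀ k, γ k ≤ (k:ℕ)) :
    (Finset.range n).image (fun m => (stp n γ m).1 % (n:ℤ)) = Finset.Ico (0:ℤ) (n:ℤ) := by
  obtain ⟨h1, h2, h3⟩ := stp_inv hn γ hγ (n-1) le_rfl
  rw [show n - 1 + 1 = n by omega] at h1 h2
  rw [← h1]
  apply Finset.eq_of_subset_of_card_le h3
  rw [h2]
  have : (Finset.Ico (0:ℤ) (n:ℤ)).card = ((n:ℤ) - 0).toNat := Int.card_Ico 0 n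
  omega

lemma wOf_res (hn : 2 ≤ n) (hγ : ∀ k, γ k ≤ (k:ℕ))
    (i l : ℤ) (hi1 : 1 ≤ i) (hi2 : i ≤ n) (hl1 : 1 ≤ l) (hl2 : l ≤ n)
    (hdvd : (n:ℤ) ∣ wOf n γ i - wOf n γ l) : i = l := by
  have hmod : (stp n γ ((n:ℤ) - i).toNat).1 % (n:ℤ) = (stp n γ ((n:ℤ) - l).toNat).1 % (n:ℤ) := by
    have h2 : wOf n γ i ≡ wOf n γ l [ZMOD (n:ℤ)] :=
      Int.modEq_iff_dvd.mpr (dvd_sub_comm.mp hdvd)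
    exact h2
  have := stp_injOn hn hγ
    (Finset.mem_coe.mpr (Finset.mem_range.mpr (show ((n:ℤ) - i).toNat < n by omega)))
    (Finset.mem_coe.mpr (Finset.mem_range.mpr (show ((n:ℤ) - l).toNat < n by omega))) hmod
  omega

lemma sOf_bijective (hn : 2 ≤ n) (hγ : ∀ k, γ k ≤ (k:ℕ)) : Function.Bijective (sOf n γ) := by
  have hn0 : (0:ℤ) < n := by omega
  constructor
  · intro a b hab
    rw [sOf, sOf] at hab
    set ka := (a-1) % n with hka
    set kb := (b-1) % n with hkb
    have hka1 : 0 ≤ ka := Int.emod_nonneg _ (by omega)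
    have hka2 : ka < n := Int.emod_lt_of_pos _ hn0
    have hkb1 : 0 ≤ kb := Int.emod_nonneg _ (by omega)
    have hkb2 : kb < n := Int.emod_lt_of_pos _ hn0
    have hres : (stp n γ ((n:ℤ) - (ka+1)).toNat).1 % (n:ℤ)
        = (stp n γ ((n:ℤ) - (kb+1)).toNat).1 % (n:ℤ) := by
      have hd : ((stp n γ ((n:ℤ) - (ka+1)).toNat).1 : ℤ)
          ≡ (stp n γ ((n:ℤ) - (kb+1)).toNat).1 [ZMOD (n:ℤ)] := by
        apply Int.modEq_iff_dvd.mpr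
        refine ⟨(a-1)/n - (b-1)/n, ?_⟩
        rw [wOf, wOf] at hab
        nlinarith [hab]
      exact hd
    have hmm := stp_injOn hn hγ
      (Finset.mem_coe.mpr (Finset.mem_range.mpr (show ((n:ℤ) - (ka+1)).toNat < n by omega)))
      (Finset.mem_coe.mpr (Finset.mem_range.mpr (show ((n:ℤ) - (kb+1)).toNat < n by omega))) hres
    have hkk : ka = kb := by omega
    rw [wOf, wOf, hkk] at hab
    have hq : (a-1)/n = (b-1)/n := by
      have := hab
      have h2 : (n:ℤ) * ((a-1)/n) = (n:ℤ) * ((b-1)/n) := by omega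
      exact mul_left_cancel₀ (by omega) h2
    have ha' := Int.emod_add_mul_ediv (a-1) n
    have hb' := Int.emod_add_mul_ediv (b-1) n
    rw [← hka] at ha'
    rw [← hkb] at hb'
    have hnm : (n:ℤ) * ((a-1)/n) = (n:ℤ) * ((b-1)/n) := by rw [hq]
    omega
  · intro y
    set z := y - cOf n γ with hz
    have hzmem : z % n ∈ Finset.Ico (0:ℤ) (n:ℤ) := by
      simp only [Finset.mem_Ico]
      exact ⟨Int.emod_nonneg _ (by omega), Int.emod_lt_of_pos _ hn0⟩
    rw [← stp_res_top hn hγ] at hzmem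
    obtain ⟨m, hm, hmres⟩ := Finset.mem_image.mp hzmem
    rw [Finset.mem_range] at hm
    have hi1 : 1 ≤ (n:ℤ) - m := by omega
    have hi2 : (n:ℤ) - m ≤ n := by omega
    have hwi : wOf n γ ((n:ℤ) - m) = (stp n γ m).1 := by
      rw [wOf, show ((n:ℤ) - ((n:ℤ) - m)).toNat = m by omega]
    have hdvd : (n:ℤ) ∣ z - (stp n γ m).1 := by
      apply Int.ModEq.dvd
      exact hmres
    obtain ⟨q, hq⟩ := hdvd
    have hmc : (n:ℤ) * q = q * (n:ℤ) := mul_comm _ _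
    refine ⟨(n:ℤ) - m + q * n, ?_⟩
    have hper : sOf n γ ((n:ℤ) - m + q * n) = sOf n γ ((n:ℤ) - m) + q * n :=
      periodic (sOf_periodic hn) _ q
    rw [hper, sOf_window hn ((n:ℤ) - m) hi1 hi2, hwi]
    omega

lemma sOf_sum (hn : 2 ≤ n) (hγ : ∀ k, γ k ≤ (k:ℕ)) :
    ∑ i ∈ Finset.Icc (1 : ℤ) (n : ℤ), sOf n γ i = ∑ i ∈ Finset.Icc (1 : ℤ) (n : ℤ), i := by
  haveI : NeZero n := ⟨by omega⟩
  have hn0 : (0:ℤ) < n := by omega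
  -- divisibility
  have hdvd : (n:ℤ) ∣ (∑ i ∈ Finset.Icc (1:ℤ) (n:ℤ), i) - ∑ i ∈ Finset.Icc (1:ℤ) (n:ℤ), wOf n γ i := by
    rw [← ZMod.intCast_zmod_eq_zero_iff_dvd]
    push_cast
    rw [sub_eq_zero]
    have hIccCard : (Finset.Icc (1:ℤ) (n:ℤ)).card = n := by
      rw [Int.card_Icc]; omega
    have hsum1 : ∑ i ∈ Finset.Icc (1:ℤ) (n:ℤ), ((i : ZMod n)) = ∑ z : ZMod n, z := by
      have hinj : ∀ a ∈ Finset.Icc (1:ℤ) (n:ℤ), ∀ b ∈ Finset.Icc (1:ℤ) (n:ℤ),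
          ((a : ZMod n) = (b : ZMod n)) → a = b := by
        intro a ha b hb hab
        rw [Finset.mem_Icc] at ha hb
        rw [ZMod.intCast_eq_intCast_iff] at hab
        have := Int.ModEq.dvd hab
        have := dvd_zero_of_small this (by omega) (by omega)
        omega
      have himg : (Finset.Icc (1:ℤ) (n:ℤ)).image (fun i : ℤ => (i : ZMod n)) = Finset.univ := by
        apply Finset.eq_univ_of_card
        rw [Finset.card_image_of_injOn (fun a ha b hb => hinj a ha b hb), hIccCard]
        rw [ZMod.card]
      rw [← himg, Finset.sum_image hinj]
    have hsum2 : ∑ i ∈ Finset.Icc (1:ℤ) (n:ℤ), ((wOf n γ i : ZMod n)) = ∑ z : ZMod n, z := by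
      have hinj : ∀ a ∈ Finset.Icc (1:ℤ) (n:ℤ), ∀ b ∈ Finset.Icc (1:ℤ) (n:ℤ),
          ((wOf n γ a : ZMod n) = (wOf n γ b : ZMod n)) → a = b := by
        intro a ha b hb hab
        rw [Finset.mem_Icc] at ha hb
        rw [ZMod.intCast_eq_intCast_iff] at hab
        exact wOf_res hn hγ a b ha.1 ha.2 hb.1 hb.2 (Int.ModEq.dvd hab.symm)
      have himg : (Finset.Icc (1:ℤ) (n:ℤ)).image (fun i => (wOf n γ i : ZMod n)) = Finset.univ := by
        apply Finset.eq_univ_of_card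
        rw [Finset.card_image_of_injOn (fun a ha b hb => hinj a ha b hb), hIccCard]
        rw [ZMod.card]
      rw [← himg, Finset.sum_image hinj]
    rw [hsum1, hsum2]
  -- now compute
  have hwin : ∀ i ∈ Finset.Icc (1:ℤ) (n:ℤ), sOf n γ i = wOf n γ i + cOf n γ := by
    intro i hi
    rw [Finset.mem_Icc] at hi
    exact sOf_window hn i hi.1 hi.2
  rw [Finset.sum_congr rfl hwin, Finset.sum_add_distrib, Finset.sum_const, Int.card_Icc]
  have hcard : ((n:ℤ) + 1 - 1).toNat = n := by omega
  rw [hcard]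
  have hc : cOf n γ * (n:ℤ)
      = (∑ i ∈ Finset.Icc (1:ℤ) (n:ℤ), i) - ∑ i ∈ Finset.Icc (1:ℤ) (n:ℤ), wOf n γ i := by
    rw [cOf]
    exact Int.ediv_mul_cancel hdvd
  have hsmul : (n : ℕ) • cOf n γ = (n:ℤ) * cOf n γ := by simp [nsmul_eq_mul]
  rw [hsmul]
  have : (n:ℤ) * cOf n γ = cOf n γ * n := mul_comm _ _
  omega

lemma sOf_affperm (hn : 2 ≤ n) (hγ : ∀ k, γ k ≤ (k:ℕ)) : IsAffPerm n (sOf n γ) :=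
  ⟨sOf_bijective hn hγ, sOf_periodic hn, sOf_sum hn hγ⟩

end Hyp

namespace Hyp
variable {n : ℕ} {γ : Fin (n-1) → ℕ}

lemma G_sOf (hn : 2 ≤ n) (hγ : ∀ k, γ k ≤ (k:ℕ)) : G n (sOf n γ) = γ := by
  funext k
  have hk := k.isLt
  set i' : ℤ := ((k:ℕ) : ℤ) + 1 with hi'
  set j : ℕ := n - (k:ℕ) - 2 with hj
  have hj1 : j + 1 ≤ n - 1 := by omega
  have hidx1 : ((n:ℤ) - i').toNat = j + 1 := by omega
  have hidx2 : ((n:ℤ) - (i'+1)).toNat = j := by omega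
  have hw1 : sOf n γ i' = (stp n γ (j+1)).1 + cOf n γ := by
    rw [sOf_window hn i' (by omega) (by omega), wOf, hidx1]
  have hw2 : sOf n γ (i'+1) = (stp n γ j).1 + cOf n γ := by
    rw [sOf_window hn (i'+1) (by omega) (by omega), wOf, hidx2]
  obtain ⟨hFdef, hFcard, hFsub⟩ := stp_inv hn γ hγ j (by omega)
  obtain ⟨hs1, hs2, hcnt⟩ := stp_step hn γ hγ j hj1
  show (gamF n (sOf n γ) i').card = γ k
  have hbij : (gamF n (sOf n γ) i').card
      = ((Finset.Ioo (stp n γ (j+1)).1 (stp n γ j).1).filter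
          (fun t => t % (n:ℤ) ∉ (stp n γ j).2)).card := by
    apply Finset.card_nbij (i := fun t => t - cOf n γ)
    · intro t ht
      rw [Finset.mem_coe, mem_gamF] at ht
      obtain ⟨h1, h2, h3⟩ := ht
      simp only [Finset.mem_coe, Finset.mem_filter, Finset.mem_Ioo]
      refine ⟨⟨by omega, by omega⟩, ?_⟩
      rw [hFdef]
      intro hmem
      obtain ⟨m, hm, hmres⟩ := Finset.mem_image.mp hmem
      rw [Finset.mem_range] at hm
      apply h3 ((n:ℤ) - m) (by omega) (by omega)
      have hw3 : sOf n γ ((n:ℤ) - m) = (stp n γ m).1 + cOf n γ := by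
        rw [sOf_window hn ((n:ℤ) - m) (by omega) (by omega), wOf,
          show ((n:ℤ) - ((n:ℤ) - m)).toNat = m by omega]
      rw [hw3]
      have hd : (n:ℤ) ∣ (t - cOf n γ) - (stp n γ m).1 := Int.ModEq.dvd hmres
      have he : t - ((stp n γ m).1 + cOf n γ) = (t - cOf n γ) - (stp n γ m).1 := by ring
      rw [he]; exact hd
    · intro a _ b _ hab; simpa using hab
    · intro t ht
      simp only [Finset.coe_filter, Set.mem_setOf_eq, Finset.mem_Ioo] at ht
      refine ⟨t + cOf n γ, ?_, by simp⟩
      rw [Finset.mem_coe, mem_gamF]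
      refine ⟨by omega, by omega, ?_⟩
      intro l hl1 hl2 hdvd
      apply ht.2
      rw [hFdef]
      apply Finset.mem_image.mpr
      refine ⟨((n:ℤ) - l).toNat, Finset.mem_range.mpr (by omega), ?_⟩
      show (stp n γ ((n:ℤ) - l).toNat).1 % (n:ℤ) = t % (n:ℤ)
      have hw3 : sOf n γ l = (stp n γ ((n:ℤ) - l).toNat).1 + cOf n γ := by
        rw [sOf_window hn l (by omega) hl2, wOf]
      have hd : (n:ℤ) ∣ t - (stp n γ ((n:ℤ) - l).toNat).1 := by
        have he : t - (stp n γ ((n:ℤ) - l).toNat).1 = (t + cOf n γ) - sOf n γ l := by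
          rw [hw3]; ring
        rw [he]; exact hdvd
      exact (Int.modEq_iff_dvd.mpr hd : Int.ModEq _ _ _)
  rw [hbij, hcnt, gOf, dif_pos (show j < n - 1 by omega)]
  congr 1
  exact Fin.ext (by simp; omega)

end Hyp


/-- The number of dominant elements of the affine symmetric group lying in the unit
hypercube and having inversion number `d` equals the number of tuples
`γ ∈ ℕ^{n-1}` (indexed by `i = k+1` for `k : Fin (n-1)`) with `γ(i) ≤ i-1` and
`Σ (n-i)·γ(i) = d`. -/

theorem hypercube_hilbert_series (n : ℕ) (hn : 2 ≤ n) (d : ℕ) :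
    Set.ncard {s : ℤ → ℤ | IsAffPerm n s ∧ IsDominant n s ∧
      (∀ i : ℤ, 1 ≤ i → i < (n : ℤ) → s (i + 1) < s i + n) ∧ invNum n s = d} =
    Set.ncard {γ : Fin (n - 1) → ℕ | (∀ k, γ k ≤ (k : ℕ)) ∧
      ∑ k : Fin (n - 1), (n - ((k : ℕ) + 1)) * γ k = d} := by
  classical
  have hbij : Set.BijOn (Hyp.G n)
      {s : ℤ → ℤ | IsAffPerm n s ∧ IsDominant n s ∧
        (∀ i : ℤ, 1 ≤ i → i < (n : ℤ) → s (i + 1) < s i + n) ∧ invNum n s = d}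
      {γ : Fin (n - 1) → ℕ | (∀ k, γ k ≤ (k : ℕ)) ∧
        ∑ k : Fin (n - 1), (n - ((k : ℕ) + 1)) * γ k = d} := by
    refine ⟨?_, ?_, ?_⟩
    · intro s hs
      obtain ⟨h1, h2, h3, h4⟩ := hs
      constructor
      · intro k
        have hb := Hyp.gamF_card_le hn h1 h2 h3 (((k:ℕ):ℤ)+1) (by omega)
          (by have := k.isLt; omega)
        have hc : ((((k:ℕ):ℤ)+1) - 1).toNat = (k:ℕ) := by omega
        rw [hc] at hb
        exact hb
      · rw [← h4]
        exact (Hyp.invNum_eq hn h1 h2 h3).symm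
    · intro s hs s' hs' hG
      exact Hyp.eq_of_G_eq hn hs.1 hs.2.1 hs.2.2.1 hs'.1 hs'.2.1 hs'.2.2.1 hG
    · intro γ hγ
      obtain ⟨hγ1, hγ2⟩ := hγ
      have haff := Hyp.sOf_affperm hn (γ := γ) hγ1
      have hdomQ := Hyp.sOf_dominant hn (γ := γ) hγ1
      have hcubeQ := Hyp.sOf_cube hn (γ := γ) hγ1
      refine ⟨Hyp.sOf n γ, ⟨haff, hdomQ, hcubeQ, ?_⟩, Hyp.G_sOf hn hγ1⟩
      rw [Hyp.invNum_eq hn haff hdomQ hcubeQ, Hyp.G_sOf hn hγ1]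
      exact hγ2
  calc Set.ncard {s : ℤ → ℤ | IsAffPerm n s ∧ IsDominant n s ∧
      (∀ i : ℤ, 1 ≤ i → i < (n : ℤ) → s (i + 1) < s i + n) ∧ invNum n s = d}
      = Set.ncard ((Hyp.G n) '' {s : ℤ → ℤ | IsAffPerm n s ∧ IsDominant n s ∧
        (∀ i : ℤ, 1 ≤ i → i < (n : ℤ) → s (i + 1) < s i + n) ∧ invNum n s = d}) :=
        (Set.ncard_image_of_injOn hbij.injOn).symm
    _ = _ := by rw [hbij.image_eq]
end
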